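/- arXiv:0809.2280 — 8 statements merged into one kernel-verified Lean document; each statement's English description precedes it below -/
import Mathlib

section
/- For a 2x2 special unitary matrix G written as G = P⁰𝟙 + i P^i σ_i with (P⁰)² + |P|² = 1, and a unit vector X̂ ∈ ℝ³ with Lie algebra element X̂ = X̂^i σ_i, one has tr[½(𝟙 + X̂)G] = √(1 − |P × X̂|²) e^{iΘ} where cos Θ = P⁰/√(1 − |P × X̂|²); in particular the modulus of tr[½(𝟙 + X̂)G] is √(1 − |P × X̂|²) ≤ 1, with equality iff P is parallel to X̂. -/
open Matrix Complex Finset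

noncomputable def σ : Fin 3 → Matrix (Fin 2) (Fin 2) ℂ
  | 0 => !![0, 1; 1, 0]
  | 1 => !![0, -Complex.I; Complex.I, 0]
  | 2 => !![1, 0; 0, -1]

noncomputable def su2vec (v : Fin 3 → ℝ) : Matrix (Fin 2) (Fin 2) ℂ :=
  ∑ i, (v i : ℂ) • σ i

noncomputable def levi {n m : ℕ} (x : Fin n → Fin m) : ℝ :=
  ∏ p ∈ Finset.univ.filter (fun p : Fin n × Fin n => p.1 < p.2),
    ((((x p.2 : ℕ) : ℤ) - ((x p.1 : ℕ) : ℤ)).sign : ℝ)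

noncomputable def eps3 (i j k : Fin 3) : ℝ := levi ![i, j, k]
noncomputable def eps4 (i j k l : Fin 4) : ℝ := levi ![i, j, k, l]
noncomputable def eps5 (i j k l m : Fin 5) : ℝ := levi ![i, j, k, l, m]

noncomputable def det4 (a b c d : Fin 4 → ℝ) : ℝ := Matrix.det (Matrix.of fun I r => ![a, b, c, d] r I)

noncomputable def tstar (a b c : Fin 4 → ℝ) (I : Fin 4) : ℝ :=
  ∑ J, ∑ K, ∑ L, eps4 I J K L * a J * b K * c L

noncomputable def hodge (X : Matrix (Fin 4) (Fin 4) ℝ) : Matrix (Fin 4) (Fin 4) ℝ :=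
  Matrix.of fun I J => (1 / 2) * ∑ K, ∑ L, eps4 I J K L * X K L

noncomputable def sdPart (X : Matrix (Fin 4) (Fin 4) ℝ) (i : Fin 3) : ℝ :=
  (1 / 2) * (∑ j, ∑ k, eps3 i j k * X j.succ k.succ) + X 0 i.succ

noncomputable def asdPart (X : Matrix (Fin 4) (Fin 4) ℝ) (i : Fin 3) : ℝ :=
  (1 / 2) * (∑ j, ∑ k, eps3 i j k * X j.succ k.succ) - X 0 i.succ

noncomputable def wedgeV (a b : Fin 4 → ℝ) : Matrix (Fin 4) (Fin 4) ℝ :=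
  Matrix.of fun I J => a I * b J - a J * b I

/-- decomposition of tr[(1/2)(1 + X̂)G] for G ∈ SU(2). -/
theorem stmt0 (P X : Fin 3 → ℝ) (P0 : ℝ) (G : Matrix (Fin 2) (Fin 2) ℂ)
    (hG : G = (P0 : ℂ) • (1 : Matrix (Fin 2) (Fin 2) ℂ) + Complex.I • su2vec P)
    (hPnorm : P0 ^ 2 + ∑ i, P i ^ 2 = 1)
    (hX : ∑ i, X i ^ 2 = 1) :
    (∃ Θ : ℝ,
        Matrix.trace (((1 : ℝ) / 2 : ℂ) • ((1 : Matrix (Fin 2) (Fin 2) ℂ) + su2vec X) * G) =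
          (Real.sqrt (1 - ∑ i, (crossProduct P X) i ^ 2) : ℂ) * Complex.exp (Complex.I * Θ) ∧
        (Real.sqrt (1 - ∑ i, (crossProduct P X) i ^ 2) ≠ 0 →
          Real.cos Θ = P0 / Real.sqrt (1 - ∑ i, (crossProduct P X) i ^ 2))) ∧
      ‖(Matrix.trace (((1 : ℝ) / 2 : ℂ) • ((1 : Matrix (Fin 2) (Fin 2) ℂ) + su2vec X) * G))‖ =
        Real.sqrt (1 - ∑ i, (crossProduct P X) i ^ 2) ∧
      Real.sqrt (1 - ∑ i, (crossProduct P X) i ^ 2) ≤ 1 ∧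
      (Real.sqrt (1 - ∑ i, (crossProduct P X) i ^ 2) = 1 ↔ crossProduct P X = 0) := by
  have hd : (1 : ℝ) - ∑ i, (crossProduct P X) i ^ 2 = P0 ^ 2 + (∑ i, P i * X i) ^ 2 := by
    simp only [cross_apply, Fin.sum_univ_three, Matrix.cons_val_zero, Matrix.cons_val_one,
      Matrix.head_cons, Matrix.cons_val_two, Matrix.tail_cons]
    simp only [Fin.sum_univ_three] at hPnorm hX
    nlinarith [hPnorm, hX, sq_nonneg (P 0), sq_nonneg (P 1), sq_nonneg (P 2)]
  set d : ℝ := ∑ i, P i * X i with hdd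
  have htr : Matrix.trace (((1 : ℝ) / 2 : ℂ) • ((1 : Matrix (Fin 2) (Fin 2) ℂ) + su2vec X) * G) =
      (P0 : ℂ) + (d : ℝ) * Complex.I := by
    subst hG
    simp [su2vec, σ, Fin.sum_univ_three, Matrix.trace_fin_two, Matrix.mul_apply,
      Matrix.one_fin_two, Fin.sum_univ_two, Matrix.smul_apply, Matrix.add_apply, hdd]
    push_cast
    linear_combination (-Complex.I * (X 1) * (P 1)) * Complex.I_sq
  set z : ℂ := (P0 : ℂ) + (d : ℝ) * Complex.I with hz
  have habs : ‖z‖ = Real.sqrt (1 - ∑ i, (crossProduct P X) i ^ 2) := by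
    rw [hd, Complex.norm_def, Complex.normSq_apply]
    congr 1
    simp [hz]
    ring
  have hnonneg : (0:ℝ) ≤ 1 - ∑ i, (crossProduct P X) i ^ 2 := by
    rw [hd]; positivity
  refine ⟨⟨Complex.arg z, ?_, ?_⟩, ?_, ?_, ?_⟩
  · rw [htr, ← habs]
    rw [mul_comm Complex.I _]
    exact (Complex.norm_mul_exp_arg_mul_I z).symm
  · intro hr
    rw [← habs] at hr ⊢
    have hz0 : z ≠ 0 := fun h => hr (by simp [h])
    rw [Complex.cos_arg hz0]
    congr 1
    simp [hz]
  · rw [htr, habs]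
  · have h1 : Real.sqrt (1 - ∑ i, (crossProduct P X) i ^ 2) ≤ Real.sqrt 1 :=
      Real.sqrt_le_sqrt (by nlinarith [Finset.sum_nonneg (fun i (_ : i ∈ Finset.univ) => sq_nonneg ((crossProduct P X) i))])
    simpa using h1
  · rw [Real.sqrt_eq_one]
    constructor
    · intro h
      have hsum : ∑ i, (crossProduct P X) i ^ 2 = 0 := by linarith
      have := (Finset.sum_eq_zero_iff_of_nonneg (fun i _ => sq_nonneg ((crossProduct P X) i))).mp hsum
      funext i
      have := this i (Finset.mem_univ i)
      simpa [pow_eq_zero_iff] using this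
    · intro h
      simp [h]
end

section
/- For G ∈ SU(2) and a unit vector X̂ ∈ ℝ³ with associated traceless Hermitian matrix X̂ = X̂^i σ_i, the real part of ln tr[½(𝟙 + X̂)G] is nonpositive, and it is zero if and only if G commutes with X̂ (equivalently [G, X̂] = 0), in which case tr[½(𝟙 + X̂)G] = e^{iΘ} for some real Θ. -/
open Matrix Complex Finset

set_option maxHeartbeats 2000000 in
/-- Re ln tr[(1/2)(1 + X̂)G] ≤ 0, with equality (modulus 1) iff [G, X̂] = 0. -/
theorem stmt1 (G : Matrix (Fin 2) (Fin 2) ℂ)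
    (hGu : star G * G = 1) (hGd : G.det = 1)
    (X : Fin 3 → ℝ) (hX : ∑ i, X i ^ 2 = 1) :
    (Complex.log
        (Matrix.trace (((1 : ℝ) / 2 : ℂ) • ((1 : Matrix (Fin 2) (Fin 2) ℂ) + su2vec X) * G))).re ≤ 0 ∧
      (‖
          (Matrix.trace (((1 : ℝ) / 2 : ℂ) • ((1 : Matrix (Fin 2) (Fin 2) ℂ) + su2vec X) * G))‖ = 1 ↔
        G * su2vec X = su2vec X * G) ∧
      (G * su2vec X = su2vec X * G →
        ∃ Θ : ℝ,
          Matrix.trace (((1 : ℝ) / 2 : ℂ) • ((1 : Matrix (Fin 2) (Fin 2) ℂ) + su2vec X) * G) =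
            Complex.exp (Complex.I * Θ)) := by
  -- structure of G
  have hdet : IsUnit G.det := by rw [hGd]; exact isUnit_one
  have hinv : star G = G⁻¹ := by
    calc star G = star G * (G * G⁻¹) := by rw [Matrix.mul_nonsing_inv _ hdet, Matrix.mul_one]
    _ = star G * G * G⁻¹ := by rw [Matrix.mul_assoc]
    _ = G⁻¹ := by rw [hGu, Matrix.one_mul]
  have hadj : star G = G.adjugate := by
    rw [hinv, Matrix.inv_def, hGd]; simp
  rw [Matrix.adjugate_fin_two] at hadj
  have h00 := congrFun (congrFun hadj 0) 0
  have h01 := congrFun (congrFun hadj 0) 1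
  simp [Matrix.star_apply] at h00 h01
  have hd : G 1 1 = starRingEnd ℂ (G 0 0) := h00.symm
  have hc : G 1 0 = -starRingEnd ℂ (G 0 1) := by
    have := congrArg (starRingEnd ℂ) h01; simpa using this
  set a₁ := (G 0 0).re with ha1
  set a₂ := (G 0 0).im with ha2
  set b₁ := (G 0 1).re with hb1
  set b₂ := (G 0 1).im with hb2
  set x := X 0 with hx0
  set y := X 1 with hy0
  set z := X 2 with hz0
  have hn : a₁^2 + a₂^2 + b₁^2 + b₂^2 = 1 := by
    have hdet2 : G 0 0 * G 1 1 - G 0 1 * G 1 0 = 1 := by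
      rw [← hGd, Matrix.det_fin_two]
    rw [hd, hc] at hdet2
    have := congrArg Complex.re hdet2
    simp [Complex.mul_re, Complex.conj_re, Complex.conj_im] at this
    nlinarith [this]
  have hX3 : x^2 + y^2 + z^2 = 1 := by
    rw [← hX, Fin.sum_univ_three]
  -- the trace
  set s : ℝ := z * a₂ + x * b₂ + y * b₁ with hs
  have hT : Matrix.trace (((1 : ℝ) / 2 : ℂ) • ((1 : Matrix (Fin 2) (Fin 2) ℂ) + su2vec X) * G)
      = Complex.mk a₁ s := by
    simp only [su2vec, σ, Fin.sum_univ_three, Matrix.trace_fin_two]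
    apply Complex.ext <;>
      simp [Matrix.mul_apply, Fin.sum_univ_two, Matrix.one_apply, hd, hc,
        Complex.add_re, Complex.add_im, Complex.mul_re, Complex.mul_im] <;> ring
  rw [hT]
  have habs2 : (‖Complex.mk a₁ s‖)^2 = a₁^2 + s^2 := by
    rw [← Complex.normSq_eq_norm_sq]; simp [Complex.normSq_mk]; ring
  -- commutation characterization
  have hcomm : (G * su2vec X = su2vec X * G) ↔
      (b₂ * y - b₁ * x = 0 ∧ b₂ * z - a₂ * x = 0 ∧ b₁ * z - a₂ * y = 0) := by
    constructor
    · intro h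
      have h00' := congrArg Complex.re (congrFun (congrFun h 0) 0)
      have h01r := congrArg Complex.re (congrFun (congrFun h 0) 1)
      have h01i := congrArg Complex.im (congrFun (congrFun h 0) 1)
      simp [su2vec, σ, Fin.sum_univ_three, Matrix.mul_apply, Fin.sum_univ_two, hd, hc,
        Complex.add_re, Complex.add_im, Complex.mul_re, Complex.mul_im] at h00' h01r h01i
      refine ⟨by nlinarith [h00'], by nlinarith [h01i], by nlinarith [h01r]⟩
    · intro ⟨e1, e2, e3⟩
      ext i j
      fin_cases i <;> fin_cases j <;>
        · apply Complex.ext <;>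
            · simp [su2vec, σ, Fin.sum_univ_three, Matrix.mul_apply, Fin.sum_univ_two, hd, hc,
                Complex.add_re, Complex.add_im, Complex.mul_re, Complex.mul_im]
              linarith [e1, e2, e3]
  -- Lagrange identity
  have hlag : (b₂^2 + b₁^2 + a₂^2) * (x^2 + y^2 + z^2) - s^2
      = (b₂ * y - b₁ * x)^2 + (b₂ * z - a₂ * x)^2 + (b₁ * z - a₂ * y)^2 := by ring
  have key : ‖Complex.mk a₁ s‖ = 1 ↔ (G * su2vec X = su2vec X * G) := by
    rw [hcomm]
    constructor
    · intro h
      have h2 : a₁^2 + s^2 = 1 := by rw [← habs2, h]; norm_num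
      have hzero : (b₂ * y - b₁ * x)^2 + (b₂ * z - a₂ * x)^2 + (b₁ * z - a₂ * y)^2 = 0 := by
        rw [← hlag, hX3]; linear_combination hn - h2
      refine ⟨?_, ?_, ?_⟩ <;> nlinarith [sq_nonneg (b₂ * y - b₁ * x), sq_nonneg (b₂ * z - a₂ * x), sq_nonneg (b₁ * z - a₂ * y), hzero]
    · intro ⟨e1, e2, e3⟩
      have h2 : a₁^2 + s^2 = 1 := by
        have hsB : s^2 = b₂^2 + b₁^2 + a₂^2 := by
          linear_combination -hlag + (b₂^2 + b₁^2 + a₂^2) * hX3 - (b₂*y - b₁*x)*e1 - (b₂*z - a₂*x)*e2 - (b₁*z - a₂*y)*e3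
        linear_combination hsB + hn
      have : (‖Complex.mk a₁ s‖)^2 = 1 := by rw [habs2, h2]
      nlinarith [this, norm_nonneg (Complex.mk a₁ s)]
  refine ⟨?_, key, ?_⟩
  · -- Re log ≤ 0
    have hle : ‖Complex.mk a₁ s‖ ≤ 1 := by
      have : a₁^2 + s^2 ≤ 1 := by nlinarith [hlag, hX3, hn, sq_nonneg (b₂ * y - b₁ * x), sq_nonneg (b₂ * z - a₂ * x), sq_nonneg (b₁ * z - a₂ * y)]
      nlinarith [habs2, norm_nonneg (Complex.mk a₁ s), this]
    rw [Complex.log_re]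
    exact Real.log_nonpos (norm_nonneg _) hle
  · intro h
    have h1 : ‖Complex.mk a₁ s‖ = 1 := key.mpr h
    have hthis := Complex.norm_mul_exp_arg_mul_I (Complex.mk a₁ s)
    rw [h1] at hthis
    refine ⟨Complex.arg (Complex.mk a₁ s), Eq.symm ?_⟩
    rw [mul_comm Complex.I]
    simpa using hthis
end

section
/- For G ∈ SU(2) and unit vector X̂ ∈ ℝ³, writing Ŷ = 2(𝟙 + X̂^iσ_i)/tr[(𝟙 + X̂^iσ_i)G]: if [G, X̂^iσ_i] = 0 (the maximality condition) then Ŷ G = G Ŷ = 𝟙 + X̂^iσ_i. -/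
open Matrix Complex Finset

lemma ch2 (A : Matrix (Fin 2) (Fin 2) ℂ) :
    A * A = A.trace • A - A.det • (1 : Matrix (Fin 2) (Fin 2) ℂ) := by
  ext i j
  fin_cases i <;> fin_cases j <;>
    simp [Matrix.mul_apply, Fin.sum_univ_two, Matrix.trace_fin_two, Matrix.det_fin_two,
      Matrix.one_apply, Matrix.smul_apply, Matrix.sub_apply] <;> ring

lemma su2vec_eq (X : Fin 3 → ℝ) :
    su2vec X = !![(X 2 : ℂ), (X 0 : ℂ) - (X 1 : ℂ) * Complex.I;
      (X 0 : ℂ) + (X 1 : ℂ) * Complex.I, -(X 2 : ℂ)] := by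
  ext i j
  fin_cases i <;> fin_cases j <;>
    simp [su2vec, σ, Fin.sum_univ_three, Matrix.sum_apply] <;> ring

/-- the maximality condition implies ŶG = GŶ = 1 + X̂. -/
theorem stmt2 (G : Matrix (Fin 2) (Fin 2) ℂ)
    (hGu : star G * G = 1) (hGd : G.det = 1)
    (X : Fin 3 → ℝ) (hX : ∑ i, X i ^ 2 = 1)
    (htr : Matrix.trace (((1 : Matrix (Fin 2) (Fin 2) ℂ) + su2vec X) * G) ≠ 0)
    (hcomm : G * su2vec X = su2vec X * G) :
    ((2 / Matrix.trace (((1 : Matrix (Fin 2) (Fin 2) ℂ) + su2vec X) * G)) •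
          ((1 : Matrix (Fin 2) (Fin 2) ℂ) + su2vec X)) * G =
        (1 : Matrix (Fin 2) (Fin 2) ℂ) + su2vec X ∧
      G * ((2 / Matrix.trace (((1 : Matrix (Fin 2) (Fin 2) ℂ) + su2vec X) * G)) •
          ((1 : Matrix (Fin 2) (Fin 2) ℂ) + su2vec X)) =
        (1 : Matrix (Fin 2) (Fin 2) ℂ) + su2vec X := by
  set P : Matrix (Fin 2) (Fin 2) ℂ := (1 : Matrix (Fin 2) (Fin 2) ℂ) + su2vec X with hP
  set t : ℂ := Matrix.trace (P * G) with ht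
  have hXc : ((X 0 : ℂ))^2 + ((X 1 : ℂ))^2 + ((X 2 : ℂ))^2 = 1 := by
    rw [Fin.sum_univ_three] at hX
    exact_mod_cast congrArg (fun r : ℝ => (r : ℂ)) hX
  have hPG : G * P = P * G := by
    rw [hP, mul_add, add_mul, mul_one, one_mul, hcomm]
  have hdetP : P.det = 0 := by
    have hPe : P = !![1 + (X 2 : ℂ), (X 0 : ℂ) - (X 1 : ℂ) * Complex.I;
        (X 0 : ℂ) + (X 1 : ℂ) * Complex.I, 1 - (X 2 : ℂ)] := by
      rw [hP, su2vec_eq]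
      ext i j
      fin_cases i <;> fin_cases j <;>
        simp [Matrix.one_apply, Matrix.add_apply] <;> ring
    rw [hPe, Matrix.det_fin_two_of]
    linear_combination -hXc + ((X 1 : ℂ))^2 * Complex.I_sq
  have hM2 : su2vec X * su2vec X = 1 := by
    rw [su2vec_eq]
    ext i j
    fin_cases i <;> fin_cases j
    · simp [Matrix.mul_apply, Fin.sum_univ_two, Matrix.one_apply]
      linear_combination hXc - ((X 1 : ℂ))^2 * Complex.I_sq
    · simp [Matrix.mul_apply, Fin.sum_univ_two, Matrix.one_apply]
      try ring
    · simp [Matrix.mul_apply, Fin.sum_univ_two, Matrix.one_apply]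
      try ring
    · simp [Matrix.mul_apply, Fin.sum_univ_two, Matrix.one_apply]
      linear_combination hXc - ((X 1 : ℂ))^2 * Complex.I_sq
  have hPP : P * P = P + P := by
    rw [hP, add_mul, mul_add, mul_add, hM2]
    simp only [one_mul, mul_one]
    abel
  have hGr : G * star G = 1 := mul_eq_one_comm.mp hGu
  have hch : (P * G) * (P * G) = t • (P * G) := by
    rw [ch2, Matrix.det_mul, hdetP, zero_mul, zero_smul, sub_zero, ht]
  have hrw : (P * G) * (P * G) = (P + P) * (G * G) := by
    calc (P * G) * (P * G) = P * (G * P) * G := by noncomm_ring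
    _ = P * (P * G) * G := by rw [hPG]
    _ = (P * P) * (G * G) := by noncomm_ring
    _ = (P + P) * (G * G) := by rw [hPP]
  have hkey : P * G + P * G = t • P := by
    have h2 : (P + P) * (G * G) = t • (P * G) := by rw [← hrw, hch]
    have h3 := congrArg (fun A => A * star G) h2
    simp only [Matrix.smul_mul] at h3
    calc P * G + P * G = (P + P) * G := (add_mul P P G).symm
    _ = (P + P) * (G * G) * star G := by
          rw [Matrix.mul_assoc, Matrix.mul_assoc, hGr, Matrix.mul_one]
    _ = t • (P * G * star G) := h3
    _ = t • P := by rw [Matrix.mul_assoc, hGr, Matrix.mul_one]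
  have h2s : (2 : ℂ) • (P * G) = t • P := by rw [two_smul]; exact hkey
  have hmain : (2 / t) • (P * G) = P := by
    rw [div_eq_inv_mul, mul_smul, h2s, smul_smul, inv_mul_cancel₀ htr, one_smul]
  constructor
  · rw [Matrix.smul_mul]; exact hmain
  · rw [Matrix.mul_smul, hPG]; exact hmain
end

section
/- For u = Û⁰𝟙 + iÛ^iσ_i ∈ SU(2) corresponding to a unit vector Û ∈ ℝ⁴, and a bivector X on ℝ⁴ with self-dual/anti-self-dual parts X^± ∈ su(2), the identity (1/2i)(uX⁺ + X⁻u) = (⋆X·Û)₀ 𝟙 + i(⋆X·Û)_i σ^i holds, where (X·U)_I = X_{IJ}U^J and (⋆X)_{IJ} = ½ε_{IJKL}X^{KL}. -/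
open Matrix Complex Finset

set_option maxHeartbeats 2000000 in
/-- the identity (1/2i)(uX⁺ + X⁻u) = (⋆X·Û)₀𝟙 + i(⋆X·Û)ᵢσⁱ. -/
theorem stmt5 (X : Matrix (Fin 4) (Fin 4) ℝ) (hXa : Xᵀ = -X)
    (U : Fin 4 → ℝ) (hU : ∑ I, U I ^ 2 = 1) :
    (1 / (2 * Complex.I)) •
        (((U 0 : ℂ) • (1 : Matrix (Fin 2) (Fin 2) ℂ) + Complex.I • su2vec (fun i => U i.succ)) *
            su2vec (sdPart X) +
          su2vec (asdPart X) *
            ((U 0 : ℂ) • (1 : Matrix (Fin 2) (Fin 2) ℂ) + Complex.I • su2vec (fun i => U i.succ))) =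
      ((∑ J, hodge X 0 J * U J : ℝ) : ℂ) • (1 : Matrix (Fin 2) (Fin 2) ℂ) +
        Complex.I • su2vec (fun i => ∑ J, hodge X i.succ J * U J) := by
  have hX : ∀ I J, X J I = -X I J := fun I J => by
    have := congrFun (congrFun hXa J) I
    simp only [Matrix.transpose_apply, Matrix.neg_apply] at this
    linarith
  have h00 : X 0 0 = 0 := by have := hX 0 0; linarith
  have h11 : X 1 1 = 0 := by have := hX 1 1; linarith
  have h22 : X 2 2 = 0 := by have := hX 2 2; linarith
  have h33 : X 3 3 = 0 := by have := hX 3 3; linarith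
  have e10 := hX 0 1; have e20 := hX 0 2; have e30 := hX 0 3
  have e21 := hX 1 2; have e31 := hX 1 3; have e32 := hX 2 3
  have hhodge : ∀ I J, hodge X I J =
      !![0, X 2 3, -(X 1 3), X 1 2;
         -(X 2 3), 0, X 0 3, -(X 0 2);
         X 1 3, -(X 0 3), 0, X 0 1;
         -(X 1 2), X 0 2, -(X 0 1), 0] I J := by
    intro I J
    fin_cases I <;> fin_cases J <;>
      · simp only [hodge, Fin.sum_univ_four, eps4, levi, Finset.prod_filter,
          Fintype.prod_prod_type, Fin.prod_univ_four, Matrix.of_apply,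
          Matrix.cons_val_zero, Matrix.cons_val_one, Matrix.head_cons,
          Matrix.cons_val_two, Matrix.tail_cons, Matrix.cons_val_three,
          Fin.lt_def, Fin.val_zero, Fin.val_one, Fin.val_two,
          show ((3:Fin 4):ℕ) = 3 from rfl]
        norm_num [show ((1:ℤ).sign = 1) from rfl, show ((2:ℤ).sign = 1) from rfl, show ((3:ℤ).sign = 1) from rfl, show (((-1):ℤ).sign = -1) from rfl, show (((-2):ℤ).sign = -1) from rfl, show (((-3):ℤ).sign = -1) from rfl, e10, e20, e30, e21, e31, e32, h00, h11, h22, h33]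
        try ring
        try rfl
  have hsd : ∀ i, sdPart X i = ![X 2 3 + X 0 1, -(X 1 3) + X 0 2, X 1 2 + X 0 3] i := by
    intro i
    fin_cases i <;>
      · simp only [sdPart, Fin.sum_univ_three, eps3, levi, Finset.prod_filter,
          Fintype.prod_prod_type, Fin.prod_univ_three, Matrix.of_apply,
          Matrix.cons_val_zero, Matrix.cons_val_one, Matrix.head_cons,
          Matrix.cons_val_two, Matrix.tail_cons,
          Fin.lt_def, Fin.val_zero, Fin.val_one, Fin.val_two]
        norm_num [show ((1:ℤ).sign = 1) from rfl, show ((2:ℤ).sign = 1) from rfl, show ((3:ℤ).sign = 1) from rfl, show (((-1):ℤ).sign = -1) from rfl, show (((-2):ℤ).sign = -1) from rfl, show (((-3):ℤ).sign = -1) from rfl, e10, e20, e30, e21, e31, e32, h00, h11, h22, h33,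
          Fin.succ_zero_eq_one, Fin.succ_one_eq_two, show (Fin.succ 2 : Fin 4) = 3 from rfl]
        try ring
        try rfl
  have hasd : ∀ i, asdPart X i = ![X 2 3 - X 0 1, -(X 1 3) - X 0 2, X 1 2 - X 0 3] i := by
    intro i
    fin_cases i <;>
      · simp only [asdPart, Fin.sum_univ_three, eps3, levi, Finset.prod_filter,
          Fintype.prod_prod_type, Fin.prod_univ_three, Matrix.of_apply,
          Matrix.cons_val_zero, Matrix.cons_val_one, Matrix.head_cons,
          Matrix.cons_val_two, Matrix.tail_cons,
          Fin.lt_def, Fin.val_zero, Fin.val_one, Fin.val_two]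
        norm_num [show ((1:ℤ).sign = 1) from rfl, show ((2:ℤ).sign = 1) from rfl, show ((3:ℤ).sign = 1) from rfl, show (((-1):ℤ).sign = -1) from rfl, show (((-2):ℤ).sign = -1) from rfl, show (((-3):ℤ).sign = -1) from rfl, e10, e20, e30, e21, e31, e32, h00, h11, h22, h33,
          Fin.succ_zero_eq_one, Fin.succ_one_eq_two, show (Fin.succ 2 : Fin 4) = 3 from rfl]
        try ring
        try rfl
  have hI : (1 / (2 * Complex.I)) = -(Complex.I / 2) := by
    rw [one_div, mul_inv, Complex.inv_I]; ring
  rw [hI]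
  ext a b
  fin_cases a <;> fin_cases b <;>
    · simp only [su2vec, σ, Fin.sum_univ_three, hsd, hasd, hhodge, Fin.sum_univ_four,
        Matrix.mul_apply, Fin.sum_univ_two, Matrix.one_apply, Matrix.smul_apply,
        Matrix.add_apply, Matrix.sum_apply, Matrix.of_apply,
        Matrix.cons_val_zero, Matrix.cons_val_one, Matrix.head_cons,
        Matrix.cons_val_two, Matrix.tail_cons, Matrix.cons_val_three,
        Matrix.cons_val', Matrix.empty_val', Matrix.cons_val_fin_one, Matrix.head_fin_const,
        smul_eq_mul, Fin.succ_zero_eq_one, Fin.succ_one_eq_two,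
        show Fin.succ 2 = (3 : Fin 4) from rfl]
      push_cast
      simp only [Complex.ext_iff, Complex.add_re, Complex.add_im, Complex.mul_re,
        Complex.mul_im, Complex.neg_re, Complex.neg_im, Complex.I_re, Complex.I_im,
        Complex.ofReal_re, Complex.ofReal_im, Complex.one_re, Complex.one_im,
        Complex.sub_re, Complex.sub_im, Complex.zero_re, Complex.zero_im,
        Complex.div_ofNat_re, Complex.div_ofNat_im, mul_one, mul_zero]
      norm_num
      constructor <;> ring
end

section
/- With E_{ij} a nondegenerate closed co-tetrad on five labels and U^i its dual tetrad, the inverse formula E_{jk} = (V₄/3!) ∑_{i₁,i₂,i₃} ε_{kji₁i₂i₃} ⋆(U^{i₁} ∧ U^{i₂} ∧ U^{i₃}) holds, where V₄ = det(E_{21}, E_{31}, E_{41}, E_{51}). -/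
open Matrix Complex Finset

section AuxStmt11
@[simp] lemma sgnhelp1 : Int.sign 1 = 1 := rfl
@[simp] lemma sgnhelp2 : Int.sign 2 = 1 := rfl
@[simp] lemma sgnhelp3 : Int.sign 3 = 1 := rfl
@[simp] lemma sgnhelp4 : Int.sign 4 = 1 := rfl
@[simp] lemma sgnhelpm1 : Int.sign (-1) = -1 := rfl
@[simp] lemma sgnhelpm2 : Int.sign (-2) = -1 := rfl
@[simp] lemma sgnhelpm3 : Int.sign (-3) = -1 := rfl
@[simp] lemma sgnhelpm4 : Int.sign (-4) = -1 := rfl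
@[simp] lemma valhelp52 : ((2:Fin 5):ℕ) = 2 := rfl
@[simp] lemma valhelp53 : ((3:Fin 5):ℕ) = 3 := rfl
@[simp] lemma valhelp54 : ((4:Fin 5):ℕ) = 4 := rfl
@[simp] lemma valhelp42 : ((2:Fin 4):ℕ) = 2 := rfl
@[simp] lemma valhelp43 : ((3:Fin 4):ℕ) = 3 := rfl

lemma fmk4_0 {h : (0:ℕ) < 4} : (⟨0, h⟩ : Fin 4) = 0 := rfl
lemma fmk4_1 {h : (1:ℕ) < 4} : (⟨1, h⟩ : Fin 4) = 1 := rfl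
lemma fmk4_2 {h : (2:ℕ) < 4} : (⟨2, h⟩ : Fin 4) = 2 := rfl
lemma fmk4_3 {h : (3:ℕ) < 4} : (⟨3, h⟩ : Fin 4) = 3 := rfl
lemma fmk5_0 {h : (0:ℕ) < 5} : (⟨0, h⟩ : Fin 5) = 0 := rfl
lemma fmk5_1 {h : (1:ℕ) < 5} : (⟨1, h⟩ : Fin 5) = 1 := rfl
lemma fmk5_2 {h : (2:ℕ) < 5} : (⟨2, h⟩ : Fin 5) = 2 := rfl
lemma fmk5_3 {h : (3:ℕ) < 5} : (⟨3, h⟩ : Fin 5) = 3 := rfl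
lemma fmk5_4 {h : (4:ℕ) < 5} : (⟨4, h⟩ : Fin 5) = 4 := rfl

lemma fsucc4_0 {h : (0:ℕ) < 4} : Fin.succ (⟨0, h⟩ : Fin 4) = (1 : Fin 5) := rfl
lemma fsucc4_1 {h : (1:ℕ) < 4} : Fin.succ (⟨1, h⟩ : Fin 4) = (2 : Fin 5) := rfl
lemma fsucc4_2 {h : (2:ℕ) < 4} : Fin.succ (⟨2, h⟩ : Fin 4) = (3 : Fin 5) := rfl
lemma fsucc4_3 {h : (3:ℕ) < 4} : Fin.succ (⟨3, h⟩ : Fin 4) = (4 : Fin 5) := rfl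

lemma fsuccn_0 : Fin.succ (0 : Fin 4) = (1 : Fin 5) := rfl
lemma fsuccn_1 : Fin.succ (1 : Fin 4) = (2 : Fin 5) := rfl
lemma fsuccn_2 : Fin.succ (2 : Fin 4) = (3 : Fin 5) := rfl
lemma fsuccn_3 : Fin.succ (3 : Fin 4) = (4 : Fin 5) := rfl

def sg5 (a b : Fin 5) : ℝ := (((b:ℕ):ℤ) - ((a:ℕ):ℤ)).sign
def sg4h (a b : Fin 4) : ℝ := (((b:ℕ):ℤ) - ((a:ℕ):ℤ)).sign

lemma levi4_formula (a b c d : Fin 4) : eps4 a b c d =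
    sg4h a b * sg4h a c * sg4h a d * sg4h b c * sg4h b d * sg4h c d := by
  rw [eps4, levi, show (Finset.univ.filter (fun p : Fin 4 × Fin 4 => p.1 < p.2)) =
    {(0,1),(0,2),(0,3),(1,2),(1,3),(2,3)} from by decide]
  simp [sg4h, Finset.prod_insert, Fin.isValue]
  ring

lemma levi5_formula (a b c d e : Fin 5) : eps5 a b c d e =
    sg5 a b * sg5 a c * sg5 a d * sg5 a e * sg5 b c * sg5 b d * sg5 b e * sg5 c d * sg5 c e * sg5 d e := by
  rw [eps5, levi, show (Finset.univ.filter (fun p : Fin 5 × Fin 5 => p.1 < p.2)) =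
    {(0,1),(0,2),(0,3),(0,4),(1,2),(1,3),(1,4),(2,3),(2,4),(3,4)} from by decide]
  simp [sg5, Finset.prod_insert, Fin.isValue]
  ring


lemma tstar_e0 (a b c : Fin 4 → ℝ) : tstar a b c 0 = a 1 * b 2 * c 3 - a 1 * b 3 * c 2 - a 2 * b 1 * c 3 + a 2 * b 3 * c 1 + a 3 * b 1 * c 2 - a 3 * b 2 * c 1 := by
  simp only [tstar, Fin.sum_univ_four, levi4_formula]
  norm_num [sg4h]
  try ring

lemma tstar_e1 (a b c : Fin 4 → ℝ) : tstar a b c 1 = -a 0 * b 2 * c 3 + a 0 * b 3 * c 2 + a 2 * b 0 * c 3 - a 2 * b 3 * c 0 - a 3 * b 0 * c 2 + a 3 * b 2 * c 0 := by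
  simp only [tstar, Fin.sum_univ_four, levi4_formula]
  norm_num [sg4h]
  try ring

lemma tstar_e2 (a b c : Fin 4 → ℝ) : tstar a b c 2 = a 0 * b 1 * c 3 - a 0 * b 3 * c 1 - a 1 * b 0 * c 3 + a 1 * b 3 * c 0 + a 3 * b 0 * c 1 - a 3 * b 1 * c 0 := by
  simp only [tstar, Fin.sum_univ_four, levi4_formula]
  norm_num [sg4h]
  try ring

lemma tstar_e3 (a b c : Fin 4 → ℝ) : tstar a b c 3 = -a 0 * b 1 * c 2 + a 0 * b 2 * c 1 + a 1 * b 0 * c 2 - a 1 * b 2 * c 0 - a 2 * b 0 * c 1 + a 2 * b 1 * c 0 := by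
  simp only [tstar, Fin.sum_univ_four, levi4_formula]
  norm_num [sg4h]
  try ring

lemma sum4h_0 (g : Fin 4 → Fin 4 → Fin 4 → ℝ) :
    (∑ a, ∑ b, ∑ c, eps4 0 a b c * g a b c) = g 1 2 3 - g 1 3 2 - g 2 1 3 + g 2 3 1 + g 3 1 2 - g 3 2 1 := by
  simp only [Fin.sum_univ_four, levi4_formula]
  norm_num [sg4h]
  try ring

lemma sum4h_1 (g : Fin 4 → Fin 4 → Fin 4 → ℝ) :
    (∑ a, ∑ b, ∑ c, eps4 1 a b c * g a b c) = -g 0 2 3 + g 0 3 2 + g 2 0 3 - g 2 3 0 - g 3 0 2 + g 3 2 0 := by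
  simp only [Fin.sum_univ_four, levi4_formula]
  norm_num [sg4h]
  try ring

lemma sum4h_2 (g : Fin 4 → Fin 4 → Fin 4 → ℝ) :
    (∑ a, ∑ b, ∑ c, eps4 2 a b c * g a b c) = g 0 1 3 - g 0 3 1 - g 1 0 3 + g 1 3 0 + g 3 0 1 - g 3 1 0 := by
  simp only [Fin.sum_univ_four, levi4_formula]
  norm_num [sg4h]
  try ring

lemma sum4h_3 (g : Fin 4 → Fin 4 → Fin 4 → ℝ) :
    (∑ a, ∑ b, ∑ c, eps4 3 a b c * g a b c) = -g 0 1 2 + g 0 2 1 + g 1 0 2 - g 1 2 0 - g 2 0 1 + g 2 1 0 := by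
  simp only [Fin.sum_univ_four, levi4_formula]
  norm_num [sg4h]
  try ring

lemma sum5h_0_0 (f : Fin 5 → Fin 5 → Fin 5 → ℝ) :
    (∑ i1, ∑ i2, ∑ i3, eps5 0 0 i1 i2 i3 * f i1 i2 i3) = 0 := by
  simp only [Fin.sum_univ_five, levi5_formula]
  norm_num [sg5]
  try ring

lemma sum5h_0_1 (f : Fin 5 → Fin 5 → Fin 5 → ℝ) :
    (∑ i1, ∑ i2, ∑ i3, eps5 0 1 i1 i2 i3 * f i1 i2 i3) = f 2 3 4 - f 2 4 3 - f 3 2 4 + f 3 4 2 + f 4 2 3 - f 4 3 2 := by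
  simp only [Fin.sum_univ_five, levi5_formula]
  norm_num [sg5]
  try ring

lemma sum5h_0_2 (f : Fin 5 → Fin 5 → Fin 5 → ℝ) :
    (∑ i1, ∑ i2, ∑ i3, eps5 0 2 i1 i2 i3 * f i1 i2 i3) = -f 1 3 4 + f 1 4 3 + f 3 1 4 - f 3 4 1 - f 4 1 3 + f 4 3 1 := by
  simp only [Fin.sum_univ_five, levi5_formula]
  norm_num [sg5]
  try ring

lemma sum5h_0_3 (f : Fin 5 → Fin 5 → Fin 5 → ℝ) :
    (∑ i1, ∑ i2, ∑ i3, eps5 0 3 i1 i2 i3 * f i1 i2 i3) = f 1 2 4 - f 1 4 2 - f 2 1 4 + f 2 4 1 + f 4 1 2 - f 4 2 1 := by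
  simp only [Fin.sum_univ_five, levi5_formula]
  norm_num [sg5]
  try ring

lemma sum5h_0_4 (f : Fin 5 → Fin 5 → Fin 5 → ℝ) :
    (∑ i1, ∑ i2, ∑ i3, eps5 0 4 i1 i2 i3 * f i1 i2 i3) = -f 1 2 3 + f 1 3 2 + f 2 1 3 - f 2 3 1 - f 3 1 2 + f 3 2 1 := by
  simp only [Fin.sum_univ_five, levi5_formula]
  norm_num [sg5]
  try ring

lemma sum5h_1_0 (f : Fin 5 → Fin 5 → Fin 5 → ℝ) :
    (∑ i1, ∑ i2, ∑ i3, eps5 1 0 i1 i2 i3 * f i1 i2 i3) = -f 2 3 4 + f 2 4 3 + f 3 2 4 - f 3 4 2 - f 4 2 3 + f 4 3 2 := by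
  simp only [Fin.sum_univ_five, levi5_formula]
  norm_num [sg5]
  try ring

lemma sum5h_1_1 (f : Fin 5 → Fin 5 → Fin 5 → ℝ) :
    (∑ i1, ∑ i2, ∑ i3, eps5 1 1 i1 i2 i3 * f i1 i2 i3) = 0 := by
  simp only [Fin.sum_univ_five, levi5_formula]
  norm_num [sg5]
  try ring

lemma sum5h_1_2 (f : Fin 5 → Fin 5 → Fin 5 → ℝ) :
    (∑ i1, ∑ i2, ∑ i3, eps5 1 2 i1 i2 i3 * f i1 i2 i3) = f 0 3 4 - f 0 4 3 - f 3 0 4 + f 3 4 0 + f 4 0 3 - f 4 3 0 := by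
  simp only [Fin.sum_univ_five, levi5_formula]
  norm_num [sg5]
  try ring

lemma sum5h_1_3 (f : Fin 5 → Fin 5 → Fin 5 → ℝ) :
    (∑ i1, ∑ i2, ∑ i3, eps5 1 3 i1 i2 i3 * f i1 i2 i3) = -f 0 2 4 + f 0 4 2 + f 2 0 4 - f 2 4 0 - f 4 0 2 + f 4 2 0 := by
  simp only [Fin.sum_univ_five, levi5_formula]
  norm_num [sg5]
  try ring

lemma sum5h_1_4 (f : Fin 5 → Fin 5 → Fin 5 → ℝ) :
    (∑ i1, ∑ i2, ∑ i3, eps5 1 4 i1 i2 i3 * f i1 i2 i3) = f 0 2 3 - f 0 3 2 - f 2 0 3 + f 2 3 0 + f 3 0 2 - f 3 2 0 := by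
  simp only [Fin.sum_univ_five, levi5_formula]
  norm_num [sg5]
  try ring

lemma sum5h_2_0 (f : Fin 5 → Fin 5 → Fin 5 → ℝ) :
    (∑ i1, ∑ i2, ∑ i3, eps5 2 0 i1 i2 i3 * f i1 i2 i3) = f 1 3 4 - f 1 4 3 - f 3 1 4 + f 3 4 1 + f 4 1 3 - f 4 3 1 := by
  simp only [Fin.sum_univ_five, levi5_formula]
  norm_num [sg5]
  try ring

lemma sum5h_2_1 (f : Fin 5 → Fin 5 → Fin 5 → ℝ) :
    (∑ i1, ∑ i2, ∑ i3, eps5 2 1 i1 i2 i3 * f i1 i2 i3) = -f 0 3 4 + f 0 4 3 + f 3 0 4 - f 3 4 0 - f 4 0 3 + f 4 3 0 := by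
  simp only [Fin.sum_univ_five, levi5_formula]
  norm_num [sg5]
  try ring

lemma sum5h_2_2 (f : Fin 5 → Fin 5 → Fin 5 → ℝ) :
    (∑ i1, ∑ i2, ∑ i3, eps5 2 2 i1 i2 i3 * f i1 i2 i3) = 0 := by
  simp only [Fin.sum_univ_five, levi5_formula]
  norm_num [sg5]
  try ring

lemma sum5h_2_3 (f : Fin 5 → Fin 5 → Fin 5 → ℝ) :
    (∑ i1, ∑ i2, ∑ i3, eps5 2 3 i1 i2 i3 * f i1 i2 i3) = f 0 1 4 - f 0 4 1 - f 1 0 4 + f 1 4 0 + f 4 0 1 - f 4 1 0 := by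
  simp only [Fin.sum_univ_five, levi5_formula]
  norm_num [sg5]
  try ring

lemma sum5h_2_4 (f : Fin 5 → Fin 5 → Fin 5 → ℝ) :
    (∑ i1, ∑ i2, ∑ i3, eps5 2 4 i1 i2 i3 * f i1 i2 i3) = -f 0 1 3 + f 0 3 1 + f 1 0 3 - f 1 3 0 - f 3 0 1 + f 3 1 0 := by
  simp only [Fin.sum_univ_five, levi5_formula]
  norm_num [sg5]
  try ring

lemma sum5h_3_0 (f : Fin 5 → Fin 5 → Fin 5 → ℝ) :
    (∑ i1, ∑ i2, ∑ i3, eps5 3 0 i1 i2 i3 * f i1 i2 i3) = -f 1 2 4 + f 1 4 2 + f 2 1 4 - f 2 4 1 - f 4 1 2 + f 4 2 1 := by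
  simp only [Fin.sum_univ_five, levi5_formula]
  norm_num [sg5]
  try ring

lemma sum5h_3_1 (f : Fin 5 → Fin 5 → Fin 5 → ℝ) :
    (∑ i1, ∑ i2, ∑ i3, eps5 3 1 i1 i2 i3 * f i1 i2 i3) = f 0 2 4 - f 0 4 2 - f 2 0 4 + f 2 4 0 + f 4 0 2 - f 4 2 0 := by
  simp only [Fin.sum_univ_five, levi5_formula]
  norm_num [sg5]
  try ring

lemma sum5h_3_2 (f : Fin 5 → Fin 5 → Fin 5 → ℝ) :
    (∑ i1, ∑ i2, ∑ i3, eps5 3 2 i1 i2 i3 * f i1 i2 i3) = -f 0 1 4 + f 0 4 1 + f 1 0 4 - f 1 4 0 - f 4 0 1 + f 4 1 0 := by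
  simp only [Fin.sum_univ_five, levi5_formula]
  norm_num [sg5]
  try ring

lemma sum5h_3_3 (f : Fin 5 → Fin 5 → Fin 5 → ℝ) :
    (∑ i1, ∑ i2, ∑ i3, eps5 3 3 i1 i2 i3 * f i1 i2 i3) = 0 := by
  simp only [Fin.sum_univ_five, levi5_formula]
  norm_num [sg5]
  try ring

lemma sum5h_3_4 (f : Fin 5 → Fin 5 → Fin 5 → ℝ) :
    (∑ i1, ∑ i2, ∑ i3, eps5 3 4 i1 i2 i3 * f i1 i2 i3) = f 0 1 2 - f 0 2 1 - f 1 0 2 + f 1 2 0 + f 2 0 1 - f 2 1 0 := by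
  simp only [Fin.sum_univ_five, levi5_formula]
  norm_num [sg5]
  try ring

lemma sum5h_4_0 (f : Fin 5 → Fin 5 → Fin 5 → ℝ) :
    (∑ i1, ∑ i2, ∑ i3, eps5 4 0 i1 i2 i3 * f i1 i2 i3) = f 1 2 3 - f 1 3 2 - f 2 1 3 + f 2 3 1 + f 3 1 2 - f 3 2 1 := by
  simp only [Fin.sum_univ_five, levi5_formula]
  norm_num [sg5]
  try ring

lemma sum5h_4_1 (f : Fin 5 → Fin 5 → Fin 5 → ℝ) :
    (∑ i1, ∑ i2, ∑ i3, eps5 4 1 i1 i2 i3 * f i1 i2 i3) = -f 0 2 3 + f 0 3 2 + f 2 0 3 - f 2 3 0 - f 3 0 2 + f 3 2 0 := by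
  simp only [Fin.sum_univ_five, levi5_formula]
  norm_num [sg5]
  try ring

lemma sum5h_4_2 (f : Fin 5 → Fin 5 → Fin 5 → ℝ) :
    (∑ i1, ∑ i2, ∑ i3, eps5 4 2 i1 i2 i3 * f i1 i2 i3) = f 0 1 3 - f 0 3 1 - f 1 0 3 + f 1 3 0 + f 3 0 1 - f 3 1 0 := by
  simp only [Fin.sum_univ_five, levi5_formula]
  norm_num [sg5]
  try ring

lemma sum5h_4_3 (f : Fin 5 → Fin 5 → Fin 5 → ℝ) :
    (∑ i1, ∑ i2, ∑ i3, eps5 4 3 i1 i2 i3 * f i1 i2 i3) = -f 0 1 2 + f 0 2 1 + f 1 0 2 - f 1 2 0 - f 2 0 1 + f 2 1 0 := by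
  simp only [Fin.sum_univ_five, levi5_formula]
  norm_num [sg5]
  try ring

lemma sum5h_4_4 (f : Fin 5 → Fin 5 → Fin 5 → ℝ) :
    (∑ i1, ∑ i2, ∑ i3, eps5 4 4 i1 i2 i3 * f i1 i2 i3) = 0 := by
  simp only [Fin.sum_univ_five, levi5_formula]
  norm_num [sg5]
  try ring

lemma detE (N : Matrix (Fin 4) (Fin 4) ℝ) :
    N.det = N 0 0 * (N 1 1 * (N 2 2 * N 3 3 - N 2 3 * N 3 2) - N 1 2 * (N 2 1 * N 3 3 - N 2 3 * N 3 1)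
      + N 1 3 * (N 2 1 * N 3 2 - N 2 2 * N 3 1))
      - N 0 1 * (N 1 0 * (N 2 2 * N 3 3 - N 2 3 * N 3 2) - N 1 2 * (N 2 0 * N 3 3 - N 2 3 * N 3 0)
      + N 1 3 * (N 2 0 * N 3 2 - N 2 2 * N 3 0))
      + N 0 2 * (N 1 0 * (N 2 1 * N 3 3 - N 2 3 * N 3 1) - N 1 1 * (N 2 0 * N 3 3 - N 2 3 * N 3 0)
      + N 1 3 * (N 2 0 * N 3 1 - N 2 1 * N 3 0))
      - N 0 3 * (N 1 0 * (N 2 1 * N 3 2 - N 2 2 * N 3 1) - N 1 1 * (N 2 0 * N 3 2 - N 2 2 * N 3 0)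
      + N 1 2 * (N 2 0 * N 3 1 - N 2 1 * N 3 0)) := by
  rw [Matrix.det_succ_row_zero]
  simp [Fin.sum_univ_succ, Matrix.det_fin_three, Matrix.submatrix,
    show (Fin.succ 2 : Fin 4) = 3 from rfl, show (Fin.castSucc 2 : Fin 4) = 2 from rfl,
    show ((1:Fin 4).succAbove 2) = 3 from rfl, show ((2:Fin 4).succAbove 2) = 3 from rfl,
    show ((3:Fin 4).succAbove 2) = 2 from rfl]
  ring

noncomputable def Amat (N : Matrix (Fin 4) (Fin 4) ℝ) (x m : Fin 4) : ℝ :=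
  (1/6) * ∑ a, ∑ b, ∑ c, eps4 m a b c * tstar (N a) (N b) (N c) x

noncomputable def UrV (N : Matrix (Fin 4) (Fin 4) ℝ) : Fin 5 → Fin 4 → ℝ :=
  ![fun x => -(N 0 x + N 1 x + N 2 x + N 3 x), N 0, N 1, N 2, N 3]

noncomputable def EcolV (N : Matrix (Fin 4) (Fin 4) ℝ) : Fin 5 → Fin 4 → ℝ :=
  ![0, fun x => Amat N x 0, fun x => Amat N x 1, fun x => Amat N x 2, fun x => Amat N x 3]

lemma UrV_0 (N : Matrix (Fin 4) (Fin 4) ℝ) (x : Fin 4) :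
    UrV N 0 x = -(N 0 x + N 1 x + N 2 x + N 3 x) := rfl
lemma UrV_1 (N : Matrix (Fin 4) (Fin 4) ℝ) : UrV N 1 = N 0 := rfl
lemma UrV_2 (N : Matrix (Fin 4) (Fin 4) ℝ) : UrV N 2 = N 1 := rfl
lemma UrV_3 (N : Matrix (Fin 4) (Fin 4) ℝ) : UrV N 3 = N 2 := rfl
lemma UrV_4 (N : Matrix (Fin 4) (Fin 4) ℝ) : UrV N 4 = N 3 := rfl
lemma EcolV_0 (N : Matrix (Fin 4) (Fin 4) ℝ) (x : Fin 4) : EcolV N 0 x = 0 := rfl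
lemma EcolV_1 (N : Matrix (Fin 4) (Fin 4) ℝ) (x : Fin 4) : EcolV N 1 x = Amat N x 0 := rfl
lemma EcolV_2 (N : Matrix (Fin 4) (Fin 4) ℝ) (x : Fin 4) : EcolV N 2 x = Amat N x 1 := rfl
lemma EcolV_3 (N : Matrix (Fin 4) (Fin 4) ℝ) (x : Fin 4) : EcolV N 3 x = Amat N x 2 := rfl
lemma EcolV_4 (N : Matrix (Fin 4) (Fin 4) ℝ) (x : Fin 4) : EcolV N 4 x = Amat N x 3 := rfl


lemma AmatE_0_0 (N : Matrix (Fin 4) (Fin 4) ℝ) : Amat N 0 0 = N 1 1 * N 2 2 * N 3 3 - N 1 1 * N 2 3 * N 3 2 - N 1 2 * N 2 1 * N 3 3 + N 1 2 * N 2 3 * N 3 1 + N 1 3 * N 2 1 * N 3 2 - N 1 3 * N 2 2 * N 3 1 := by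
  simp only [Amat, sum4h_0, tstar_e0]
  ring

lemma AmatE_0_1 (N : Matrix (Fin 4) (Fin 4) ℝ) : Amat N 0 1 = -N 0 1 * N 2 2 * N 3 3 + N 0 1 * N 2 3 * N 3 2 + N 0 2 * N 2 1 * N 3 3 - N 0 2 * N 2 3 * N 3 1 - N 0 3 * N 2 1 * N 3 2 + N 0 3 * N 2 2 * N 3 1 := by
  simp only [Amat, sum4h_1, tstar_e0]
  ring

lemma AmatE_0_2 (N : Matrix (Fin 4) (Fin 4) ℝ) : Amat N 0 2 = N 0 1 * N 1 2 * N 3 3 - N 0 1 * N 1 3 * N 3 2 - N 0 2 * N 1 1 * N 3 3 + N 0 2 * N 1 3 * N 3 1 + N 0 3 * N 1 1 * N 3 2 - N 0 3 * N 1 2 * N 3 1 := by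
  simp only [Amat, sum4h_2, tstar_e0]
  ring

lemma AmatE_0_3 (N : Matrix (Fin 4) (Fin 4) ℝ) : Amat N 0 3 = -N 0 1 * N 1 2 * N 2 3 + N 0 1 * N 1 3 * N 2 2 + N 0 2 * N 1 1 * N 2 3 - N 0 2 * N 1 3 * N 2 1 - N 0 3 * N 1 1 * N 2 2 + N 0 3 * N 1 2 * N 2 1 := by
  simp only [Amat, sum4h_3, tstar_e0]
  ring

lemma AmatE_1_0 (N : Matrix (Fin 4) (Fin 4) ℝ) : Amat N 1 0 = -N 1 0 * N 2 2 * N 3 3 + N 1 0 * N 2 3 * N 3 2 + N 1 2 * N 2 0 * N 3 3 - N 1 2 * N 2 3 * N 3 0 - N 1 3 * N 2 0 * N 3 2 + N 1 3 * N 2 2 * N 3 0 := by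
  simp only [Amat, sum4h_0, tstar_e1]
  ring

lemma AmatE_1_1 (N : Matrix (Fin 4) (Fin 4) ℝ) : Amat N 1 1 = N 0 0 * N 2 2 * N 3 3 - N 0 0 * N 2 3 * N 3 2 - N 0 2 * N 2 0 * N 3 3 + N 0 2 * N 2 3 * N 3 0 + N 0 3 * N 2 0 * N 3 2 - N 0 3 * N 2 2 * N 3 0 := by
  simp only [Amat, sum4h_1, tstar_e1]
  ring

lemma AmatE_1_2 (N : Matrix (Fin 4) (Fin 4) ℝ) : Amat N 1 2 = -N 0 0 * N 1 2 * N 3 3 + N 0 0 * N 1 3 * N 3 2 + N 0 2 * N 1 0 * N 3 3 - N 0 2 * N 1 3 * N 3 0 - N 0 3 * N 1 0 * N 3 2 + N 0 3 * N 1 2 * N 3 0 := by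
  simp only [Amat, sum4h_2, tstar_e1]
  ring

lemma AmatE_1_3 (N : Matrix (Fin 4) (Fin 4) ℝ) : Amat N 1 3 = N 0 0 * N 1 2 * N 2 3 - N 0 0 * N 1 3 * N 2 2 - N 0 2 * N 1 0 * N 2 3 + N 0 2 * N 1 3 * N 2 0 + N 0 3 * N 1 0 * N 2 2 - N 0 3 * N 1 2 * N 2 0 := by
  simp only [Amat, sum4h_3, tstar_e1]
  ring

lemma AmatE_2_0 (N : Matrix (Fin 4) (Fin 4) ℝ) : Amat N 2 0 = N 1 0 * N 2 1 * N 3 3 - N 1 0 * N 2 3 * N 3 1 - N 1 1 * N 2 0 * N 3 3 + N 1 1 * N 2 3 * N 3 0 + N 1 3 * N 2 0 * N 3 1 - N 1 3 * N 2 1 * N 3 0 := by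
  simp only [Amat, sum4h_0, tstar_e2]
  ring

lemma AmatE_2_1 (N : Matrix (Fin 4) (Fin 4) ℝ) : Amat N 2 1 = -N 0 0 * N 2 1 * N 3 3 + N 0 0 * N 2 3 * N 3 1 + N 0 1 * N 2 0 * N 3 3 - N 0 1 * N 2 3 * N 3 0 - N 0 3 * N 2 0 * N 3 1 + N 0 3 * N 2 1 * N 3 0 := by
  simp only [Amat, sum4h_1, tstar_e2]
  ring

lemma AmatE_2_2 (N : Matrix (Fin 4) (Fin 4) ℝ) : Amat N 2 2 = N 0 0 * N 1 1 * N 3 3 - N 0 0 * N 1 3 * N 3 1 - N 0 1 * N 1 0 * N 3 3 + N 0 1 * N 1 3 * N 3 0 + N 0 3 * N 1 0 * N 3 1 - N 0 3 * N 1 1 * N 3 0 := by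
  simp only [Amat, sum4h_2, tstar_e2]
  ring

lemma AmatE_2_3 (N : Matrix (Fin 4) (Fin 4) ℝ) : Amat N 2 3 = -N 0 0 * N 1 1 * N 2 3 + N 0 0 * N 1 3 * N 2 1 + N 0 1 * N 1 0 * N 2 3 - N 0 1 * N 1 3 * N 2 0 - N 0 3 * N 1 0 * N 2 1 + N 0 3 * N 1 1 * N 2 0 := by
  simp only [Amat, sum4h_3, tstar_e2]
  ring

lemma AmatE_3_0 (N : Matrix (Fin 4) (Fin 4) ℝ) : Amat N 3 0 = -N 1 0 * N 2 1 * N 3 2 + N 1 0 * N 2 2 * N 3 1 + N 1 1 * N 2 0 * N 3 2 - N 1 1 * N 2 2 * N 3 0 - N 1 2 * N 2 0 * N 3 1 + N 1 2 * N 2 1 * N 3 0 := by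
  simp only [Amat, sum4h_0, tstar_e3]
  ring

lemma AmatE_3_1 (N : Matrix (Fin 4) (Fin 4) ℝ) : Amat N 3 1 = N 0 0 * N 2 1 * N 3 2 - N 0 0 * N 2 2 * N 3 1 - N 0 1 * N 2 0 * N 3 2 + N 0 1 * N 2 2 * N 3 0 + N 0 2 * N 2 0 * N 3 1 - N 0 2 * N 2 1 * N 3 0 := by
  simp only [Amat, sum4h_1, tstar_e3]
  ring

lemma AmatE_3_2 (N : Matrix (Fin 4) (Fin 4) ℝ) : Amat N 3 2 = -N 0 0 * N 1 1 * N 3 2 + N 0 0 * N 1 2 * N 3 1 + N 0 1 * N 1 0 * N 3 2 - N 0 1 * N 1 2 * N 3 0 - N 0 2 * N 1 0 * N 3 1 + N 0 2 * N 1 1 * N 3 0 := by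
  simp only [Amat, sum4h_2, tstar_e3]
  ring

lemma AmatE_3_3 (N : Matrix (Fin 4) (Fin 4) ℝ) : Amat N 3 3 = N 0 0 * N 1 1 * N 2 2 - N 0 0 * N 1 2 * N 2 1 - N 0 1 * N 1 0 * N 2 2 + N 0 1 * N 1 2 * N 2 0 + N 0 2 * N 1 0 * N 2 1 - N 0 2 * N 1 1 * N 2 0 := by
  simp only [Amat, sum4h_3, tstar_e3]
  ring

set_option maxHeartbeats 1000000 in
lemma NAh_0_0 (N : Matrix (Fin 4) (Fin 4) ℝ) :
    (∑ x, N 0 x * Amat N x 0) = N.det := by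
  rw [detE]
  simp only [Fin.sum_univ_four, AmatE_0_0, AmatE_1_0, AmatE_2_0, AmatE_3_0, Fin.isValue]
  ring

set_option maxHeartbeats 1000000 in
lemma NAh_0_1 (N : Matrix (Fin 4) (Fin 4) ℝ) :
    (∑ x, N 0 x * Amat N x 1) = 0 := by
  simp only [Fin.sum_univ_four, AmatE_0_1, AmatE_1_1, AmatE_2_1, AmatE_3_1, Fin.isValue]
  ring

set_option maxHeartbeats 1000000 in
lemma NAh_0_2 (N : Matrix (Fin 4) (Fin 4) ℝ) :
    (∑ x, N 0 x * Amat N x 2) = 0 := by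
  simp only [Fin.sum_univ_four, AmatE_0_2, AmatE_1_2, AmatE_2_2, AmatE_3_2, Fin.isValue]
  ring

set_option maxHeartbeats 1000000 in
lemma NAh_0_3 (N : Matrix (Fin 4) (Fin 4) ℝ) :
    (∑ x, N 0 x * Amat N x 3) = 0 := by
  simp only [Fin.sum_univ_four, AmatE_0_3, AmatE_1_3, AmatE_2_3, AmatE_3_3, Fin.isValue]
  ring

set_option maxHeartbeats 1000000 in
lemma NAh_1_0 (N : Matrix (Fin 4) (Fin 4) ℝ) :
    (∑ x, N 1 x * Amat N x 0) = 0 := by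
  simp only [Fin.sum_univ_four, AmatE_0_0, AmatE_1_0, AmatE_2_0, AmatE_3_0, Fin.isValue]
  ring

set_option maxHeartbeats 1000000 in
lemma NAh_1_1 (N : Matrix (Fin 4) (Fin 4) ℝ) :
    (∑ x, N 1 x * Amat N x 1) = N.det := by
  rw [detE]
  simp only [Fin.sum_univ_four, AmatE_0_1, AmatE_1_1, AmatE_2_1, AmatE_3_1, Fin.isValue]
  ring

set_option maxHeartbeats 1000000 in
lemma NAh_1_2 (N : Matrix (Fin 4) (Fin 4) ℝ) :
    (∑ x, N 1 x * Amat N x 2) = 0 := by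
  simp only [Fin.sum_univ_four, AmatE_0_2, AmatE_1_2, AmatE_2_2, AmatE_3_2, Fin.isValue]
  ring

set_option maxHeartbeats 1000000 in
lemma NAh_1_3 (N : Matrix (Fin 4) (Fin 4) ℝ) :
    (∑ x, N 1 x * Amat N x 3) = 0 := by
  simp only [Fin.sum_univ_four, AmatE_0_3, AmatE_1_3, AmatE_2_3, AmatE_3_3, Fin.isValue]
  ring

set_option maxHeartbeats 1000000 in
lemma NAh_2_0 (N : Matrix (Fin 4) (Fin 4) ℝ) :
    (∑ x, N 2 x * Amat N x 0) = 0 := by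
  simp only [Fin.sum_univ_four, AmatE_0_0, AmatE_1_0, AmatE_2_0, AmatE_3_0, Fin.isValue]
  ring

set_option maxHeartbeats 1000000 in
lemma NAh_2_1 (N : Matrix (Fin 4) (Fin 4) ℝ) :
    (∑ x, N 2 x * Amat N x 1) = 0 := by
  simp only [Fin.sum_univ_four, AmatE_0_1, AmatE_1_1, AmatE_2_1, AmatE_3_1, Fin.isValue]
  ring

set_option maxHeartbeats 1000000 in
lemma NAh_2_2 (N : Matrix (Fin 4) (Fin 4) ℝ) :
    (∑ x, N 2 x * Amat N x 2) = N.det := by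
  rw [detE]
  simp only [Fin.sum_univ_four, AmatE_0_2, AmatE_1_2, AmatE_2_2, AmatE_3_2, Fin.isValue]
  ring

set_option maxHeartbeats 1000000 in
lemma NAh_2_3 (N : Matrix (Fin 4) (Fin 4) ℝ) :
    (∑ x, N 2 x * Amat N x 3) = 0 := by
  simp only [Fin.sum_univ_four, AmatE_0_3, AmatE_1_3, AmatE_2_3, AmatE_3_3, Fin.isValue]
  ring

set_option maxHeartbeats 1000000 in
lemma NAh_3_0 (N : Matrix (Fin 4) (Fin 4) ℝ) :
    (∑ x, N 3 x * Amat N x 0) = 0 := by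
  simp only [Fin.sum_univ_four, AmatE_0_0, AmatE_1_0, AmatE_2_0, AmatE_3_0, Fin.isValue]
  ring

set_option maxHeartbeats 1000000 in
lemma NAh_3_1 (N : Matrix (Fin 4) (Fin 4) ℝ) :
    (∑ x, N 3 x * Amat N x 1) = 0 := by
  simp only [Fin.sum_univ_four, AmatE_0_1, AmatE_1_1, AmatE_2_1, AmatE_3_1, Fin.isValue]
  ring

set_option maxHeartbeats 1000000 in
lemma NAh_3_2 (N : Matrix (Fin 4) (Fin 4) ℝ) :
    (∑ x, N 3 x * Amat N x 2) = 0 := by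
  simp only [Fin.sum_univ_four, AmatE_0_2, AmatE_1_2, AmatE_2_2, AmatE_3_2, Fin.isValue]
  ring

set_option maxHeartbeats 1000000 in
lemma NAh_3_3 (N : Matrix (Fin 4) (Fin 4) ℝ) :
    (∑ x, N 3 x * Amat N x 3) = N.det := by
  rw [detE]
  simp only [Fin.sum_univ_four, AmatE_0_3, AmatE_1_3, AmatE_2_3, AmatE_3_3, Fin.isValue]
  ring

lemma NAmat (N : Matrix (Fin 4) (Fin 4) ℝ) :
    N * Matrix.of (fun x d => Amat N x d) = N.det • 1 := by
  ext e d
  rw [Matrix.mul_apply]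
  fin_cases e <;> fin_cases d <;>
    simp only [Matrix.of_apply, Matrix.smul_apply, Matrix.one_apply, smul_eq_mul,
      fmk4_0, fmk4_1, fmk4_2, fmk4_3, fmk5_0, fmk5_1, fmk5_2, fmk5_3, fmk5_4, Fin.isValue, NAh_0_0, NAh_0_1, NAh_0_2, NAh_0_3, NAh_1_0, NAh_1_1, NAh_1_2, NAh_1_3, NAh_2_0, NAh_2_1, NAh_2_2, NAh_2_3, NAh_3_0, NAh_3_1, NAh_3_2, NAh_3_3] <;>
    simp

set_option maxHeartbeats 1000000 in
lemma keyh_0_0 (N : Matrix (Fin 4) (Fin 4) ℝ) (x : Fin 4) :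
    EcolV N 0 x - EcolV N 0 x =
      (1/6) * ∑ i1, ∑ i2, ∑ i3, eps5 0 0 i1 i2 i3 * tstar (UrV N i1) (UrV N i2) (UrV N i3) x := by
  fin_cases x <;>
    simp only [sum5h_0_0, EcolV_0, AmatE_0_0, AmatE_0_1, AmatE_0_2, AmatE_0_3, AmatE_1_0, AmatE_1_1, AmatE_1_2, AmatE_1_3, AmatE_2_0, AmatE_2_1, AmatE_2_2, AmatE_2_3, AmatE_3_0, AmatE_3_1, AmatE_3_2, AmatE_3_3, tstar_e0, tstar_e1, tstar_e2, tstar_e3, UrV_0, UrV_1, UrV_2, UrV_3, UrV_4, fmk4_0, fmk4_1, fmk4_2, fmk4_3, fmk5_0, fmk5_1, fmk5_2, fmk5_3, fmk5_4, Fin.isValue] <;>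
    ring

set_option maxHeartbeats 1000000 in
lemma keyh_0_1 (N : Matrix (Fin 4) (Fin 4) ℝ) (x : Fin 4) :
    EcolV N 0 x - EcolV N 1 x =
      (1/6) * ∑ i1, ∑ i2, ∑ i3, eps5 1 0 i1 i2 i3 * tstar (UrV N i1) (UrV N i2) (UrV N i3) x := by
  fin_cases x <;>
    simp only [sum5h_1_0, EcolV_0, EcolV_1, AmatE_0_0, AmatE_0_1, AmatE_0_2, AmatE_0_3, AmatE_1_0, AmatE_1_1, AmatE_1_2, AmatE_1_3, AmatE_2_0, AmatE_2_1, AmatE_2_2, AmatE_2_3, AmatE_3_0, AmatE_3_1, AmatE_3_2, AmatE_3_3, tstar_e0, tstar_e1, tstar_e2, tstar_e3, UrV_0, UrV_1, UrV_2, UrV_3, UrV_4, fmk4_0, fmk4_1, fmk4_2, fmk4_3, fmk5_0, fmk5_1, fmk5_2, fmk5_3, fmk5_4, Fin.isValue] <;>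
    ring

set_option maxHeartbeats 1000000 in
lemma keyh_0_2 (N : Matrix (Fin 4) (Fin 4) ℝ) (x : Fin 4) :
    EcolV N 0 x - EcolV N 2 x =
      (1/6) * ∑ i1, ∑ i2, ∑ i3, eps5 2 0 i1 i2 i3 * tstar (UrV N i1) (UrV N i2) (UrV N i3) x := by
  fin_cases x <;>
    simp only [sum5h_2_0, EcolV_0, EcolV_2, AmatE_0_0, AmatE_0_1, AmatE_0_2, AmatE_0_3, AmatE_1_0, AmatE_1_1, AmatE_1_2, AmatE_1_3, AmatE_2_0, AmatE_2_1, AmatE_2_2, AmatE_2_3, AmatE_3_0, AmatE_3_1, AmatE_3_2, AmatE_3_3, tstar_e0, tstar_e1, tstar_e2, tstar_e3, UrV_0, UrV_1, UrV_2, UrV_3, UrV_4, fmk4_0, fmk4_1, fmk4_2, fmk4_3, fmk5_0, fmk5_1, fmk5_2, fmk5_3, fmk5_4, Fin.isValue] <;>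
    ring

set_option maxHeartbeats 1000000 in
lemma keyh_0_3 (N : Matrix (Fin 4) (Fin 4) ℝ) (x : Fin 4) :
    EcolV N 0 x - EcolV N 3 x =
      (1/6) * ∑ i1, ∑ i2, ∑ i3, eps5 3 0 i1 i2 i3 * tstar (UrV N i1) (UrV N i2) (UrV N i3) x := by
  fin_cases x <;>
    simp only [sum5h_3_0, EcolV_0, EcolV_3, AmatE_0_0, AmatE_0_1, AmatE_0_2, AmatE_0_3, AmatE_1_0, AmatE_1_1, AmatE_1_2, AmatE_1_3, AmatE_2_0, AmatE_2_1, AmatE_2_2, AmatE_2_3, AmatE_3_0, AmatE_3_1, AmatE_3_2, AmatE_3_3, tstar_e0, tstar_e1, tstar_e2, tstar_e3, UrV_0, UrV_1, UrV_2, UrV_3, UrV_4, fmk4_0, fmk4_1, fmk4_2, fmk4_3, fmk5_0, fmk5_1, fmk5_2, fmk5_3, fmk5_4, Fin.isValue] <;>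
    ring

set_option maxHeartbeats 1000000 in
lemma keyh_0_4 (N : Matrix (Fin 4) (Fin 4) ℝ) (x : Fin 4) :
    EcolV N 0 x - EcolV N 4 x =
      (1/6) * ∑ i1, ∑ i2, ∑ i3, eps5 4 0 i1 i2 i3 * tstar (UrV N i1) (UrV N i2) (UrV N i3) x := by
  fin_cases x <;>
    simp only [sum5h_4_0, EcolV_0, EcolV_4, AmatE_0_0, AmatE_0_1, AmatE_0_2, AmatE_0_3, AmatE_1_0, AmatE_1_1, AmatE_1_2, AmatE_1_3, AmatE_2_0, AmatE_2_1, AmatE_2_2, AmatE_2_3, AmatE_3_0, AmatE_3_1, AmatE_3_2, AmatE_3_3, tstar_e0, tstar_e1, tstar_e2, tstar_e3, UrV_0, UrV_1, UrV_2, UrV_3, UrV_4, fmk4_0, fmk4_1, fmk4_2, fmk4_3, fmk5_0, fmk5_1, fmk5_2, fmk5_3, fmk5_4, Fin.isValue] <;>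
    ring

set_option maxHeartbeats 1000000 in
lemma keyh_1_0 (N : Matrix (Fin 4) (Fin 4) ℝ) (x : Fin 4) :
    EcolV N 1 x - EcolV N 0 x =
      (1/6) * ∑ i1, ∑ i2, ∑ i3, eps5 0 1 i1 i2 i3 * tstar (UrV N i1) (UrV N i2) (UrV N i3) x := by
  fin_cases x <;>
    simp only [sum5h_0_1, EcolV_1, EcolV_0, AmatE_0_0, AmatE_0_1, AmatE_0_2, AmatE_0_3, AmatE_1_0, AmatE_1_1, AmatE_1_2, AmatE_1_3, AmatE_2_0, AmatE_2_1, AmatE_2_2, AmatE_2_3, AmatE_3_0, AmatE_3_1, AmatE_3_2, AmatE_3_3, tstar_e0, tstar_e1, tstar_e2, tstar_e3, UrV_0, UrV_1, UrV_2, UrV_3, UrV_4, fmk4_0, fmk4_1, fmk4_2, fmk4_3, fmk5_0, fmk5_1, fmk5_2, fmk5_3, fmk5_4, Fin.isValue] <;>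
    ring

set_option maxHeartbeats 1000000 in
lemma keyh_1_1 (N : Matrix (Fin 4) (Fin 4) ℝ) (x : Fin 4) :
    EcolV N 1 x - EcolV N 1 x =
      (1/6) * ∑ i1, ∑ i2, ∑ i3, eps5 1 1 i1 i2 i3 * tstar (UrV N i1) (UrV N i2) (UrV N i3) x := by
  fin_cases x <;>
    simp only [sum5h_1_1, EcolV_1, AmatE_0_0, AmatE_0_1, AmatE_0_2, AmatE_0_3, AmatE_1_0, AmatE_1_1, AmatE_1_2, AmatE_1_3, AmatE_2_0, AmatE_2_1, AmatE_2_2, AmatE_2_3, AmatE_3_0, AmatE_3_1, AmatE_3_2, AmatE_3_3, tstar_e0, tstar_e1, tstar_e2, tstar_e3, UrV_0, UrV_1, UrV_2, UrV_3, UrV_4, fmk4_0, fmk4_1, fmk4_2, fmk4_3, fmk5_0, fmk5_1, fmk5_2, fmk5_3, fmk5_4, Fin.isValue] <;>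
    ring

set_option maxHeartbeats 1000000 in
lemma keyh_1_2 (N : Matrix (Fin 4) (Fin 4) ℝ) (x : Fin 4) :
    EcolV N 1 x - EcolV N 2 x =
      (1/6) * ∑ i1, ∑ i2, ∑ i3, eps5 2 1 i1 i2 i3 * tstar (UrV N i1) (UrV N i2) (UrV N i3) x := by
  fin_cases x <;>
    simp only [sum5h_2_1, EcolV_1, EcolV_2, AmatE_0_0, AmatE_0_1, AmatE_0_2, AmatE_0_3, AmatE_1_0, AmatE_1_1, AmatE_1_2, AmatE_1_3, AmatE_2_0, AmatE_2_1, AmatE_2_2, AmatE_2_3, AmatE_3_0, AmatE_3_1, AmatE_3_2, AmatE_3_3, tstar_e0, tstar_e1, tstar_e2, tstar_e3, UrV_0, UrV_1, UrV_2, UrV_3, UrV_4, fmk4_0, fmk4_1, fmk4_2, fmk4_3, fmk5_0, fmk5_1, fmk5_2, fmk5_3, fmk5_4, Fin.isValue] <;>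
    ring

set_option maxHeartbeats 1000000 in
lemma keyh_1_3 (N : Matrix (Fin 4) (Fin 4) ℝ) (x : Fin 4) :
    EcolV N 1 x - EcolV N 3 x =
      (1/6) * ∑ i1, ∑ i2, ∑ i3, eps5 3 1 i1 i2 i3 * tstar (UrV N i1) (UrV N i2) (UrV N i3) x := by
  fin_cases x <;>
    simp only [sum5h_3_1, EcolV_1, EcolV_3, AmatE_0_0, AmatE_0_1, AmatE_0_2, AmatE_0_3, AmatE_1_0, AmatE_1_1, AmatE_1_2, AmatE_1_3, AmatE_2_0, AmatE_2_1, AmatE_2_2, AmatE_2_3, AmatE_3_0, AmatE_3_1, AmatE_3_2, AmatE_3_3, tstar_e0, tstar_e1, tstar_e2, tstar_e3, UrV_0, UrV_1, UrV_2, UrV_3, UrV_4, fmk4_0, fmk4_1, fmk4_2, fmk4_3, fmk5_0, fmk5_1, fmk5_2, fmk5_3, fmk5_4, Fin.isValue] <;>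
    ring

set_option maxHeartbeats 1000000 in
lemma keyh_1_4 (N : Matrix (Fin 4) (Fin 4) ℝ) (x : Fin 4) :
    EcolV N 1 x - EcolV N 4 x =
      (1/6) * ∑ i1, ∑ i2, ∑ i3, eps5 4 1 i1 i2 i3 * tstar (UrV N i1) (UrV N i2) (UrV N i3) x := by
  fin_cases x <;>
    simp only [sum5h_4_1, EcolV_1, EcolV_4, AmatE_0_0, AmatE_0_1, AmatE_0_2, AmatE_0_3, AmatE_1_0, AmatE_1_1, AmatE_1_2, AmatE_1_3, AmatE_2_0, AmatE_2_1, AmatE_2_2, AmatE_2_3, AmatE_3_0, AmatE_3_1, AmatE_3_2, AmatE_3_3, tstar_e0, tstar_e1, tstar_e2, tstar_e3, UrV_0, UrV_1, UrV_2, UrV_3, UrV_4, fmk4_0, fmk4_1, fmk4_2, fmk4_3, fmk5_0, fmk5_1, fmk5_2, fmk5_3, fmk5_4, Fin.isValue] <;>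
    ring

set_option maxHeartbeats 1000000 in
lemma keyh_2_0 (N : Matrix (Fin 4) (Fin 4) ℝ) (x : Fin 4) :
    EcolV N 2 x - EcolV N 0 x =
      (1/6) * ∑ i1, ∑ i2, ∑ i3, eps5 0 2 i1 i2 i3 * tstar (UrV N i1) (UrV N i2) (UrV N i3) x := by
  fin_cases x <;>
    simp only [sum5h_0_2, EcolV_2, EcolV_0, AmatE_0_0, AmatE_0_1, AmatE_0_2, AmatE_0_3, AmatE_1_0, AmatE_1_1, AmatE_1_2, AmatE_1_3, AmatE_2_0, AmatE_2_1, AmatE_2_2, AmatE_2_3, AmatE_3_0, AmatE_3_1, AmatE_3_2, AmatE_3_3, tstar_e0, tstar_e1, tstar_e2, tstar_e3, UrV_0, UrV_1, UrV_2, UrV_3, UrV_4, fmk4_0, fmk4_1, fmk4_2, fmk4_3, fmk5_0, fmk5_1, fmk5_2, fmk5_3, fmk5_4, Fin.isValue] <;>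
    ring

set_option maxHeartbeats 1000000 in
lemma keyh_2_1 (N : Matrix (Fin 4) (Fin 4) ℝ) (x : Fin 4) :
    EcolV N 2 x - EcolV N 1 x =
      (1/6) * ∑ i1, ∑ i2, ∑ i3, eps5 1 2 i1 i2 i3 * tstar (UrV N i1) (UrV N i2) (UrV N i3) x := by
  fin_cases x <;>
    simp only [sum5h_1_2, EcolV_2, EcolV_1, AmatE_0_0, AmatE_0_1, AmatE_0_2, AmatE_0_3, AmatE_1_0, AmatE_1_1, AmatE_1_2, AmatE_1_3, AmatE_2_0, AmatE_2_1, AmatE_2_2, AmatE_2_3, AmatE_3_0, AmatE_3_1, AmatE_3_2, AmatE_3_3, tstar_e0, tstar_e1, tstar_e2, tstar_e3, UrV_0, UrV_1, UrV_2, UrV_3, UrV_4, fmk4_0, fmk4_1, fmk4_2, fmk4_3, fmk5_0, fmk5_1, fmk5_2, fmk5_3, fmk5_4, Fin.isValue] <;>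
    ring

set_option maxHeartbeats 1000000 in
lemma keyh_2_2 (N : Matrix (Fin 4) (Fin 4) ℝ) (x : Fin 4) :
    EcolV N 2 x - EcolV N 2 x =
      (1/6) * ∑ i1, ∑ i2, ∑ i3, eps5 2 2 i1 i2 i3 * tstar (UrV N i1) (UrV N i2) (UrV N i3) x := by
  fin_cases x <;>
    simp only [sum5h_2_2, EcolV_2, AmatE_0_0, AmatE_0_1, AmatE_0_2, AmatE_0_3, AmatE_1_0, AmatE_1_1, AmatE_1_2, AmatE_1_3, AmatE_2_0, AmatE_2_1, AmatE_2_2, AmatE_2_3, AmatE_3_0, AmatE_3_1, AmatE_3_2, AmatE_3_3, tstar_e0, tstar_e1, tstar_e2, tstar_e3, UrV_0, UrV_1, UrV_2, UrV_3, UrV_4, fmk4_0, fmk4_1, fmk4_2, fmk4_3, fmk5_0, fmk5_1, fmk5_2, fmk5_3, fmk5_4, Fin.isValue] <;>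
    ring

set_option maxHeartbeats 1000000 in
lemma keyh_2_3 (N : Matrix (Fin 4) (Fin 4) ℝ) (x : Fin 4) :
    EcolV N 2 x - EcolV N 3 x =
      (1/6) * ∑ i1, ∑ i2, ∑ i3, eps5 3 2 i1 i2 i3 * tstar (UrV N i1) (UrV N i2) (UrV N i3) x := by
  fin_cases x <;>
    simp only [sum5h_3_2, EcolV_2, EcolV_3, AmatE_0_0, AmatE_0_1, AmatE_0_2, AmatE_0_3, AmatE_1_0, AmatE_1_1, AmatE_1_2, AmatE_1_3, AmatE_2_0, AmatE_2_1, AmatE_2_2, AmatE_2_3, AmatE_3_0, AmatE_3_1, AmatE_3_2, AmatE_3_3, tstar_e0, tstar_e1, tstar_e2, tstar_e3, UrV_0, UrV_1, UrV_2, UrV_3, UrV_4, fmk4_0, fmk4_1, fmk4_2, fmk4_3, fmk5_0, fmk5_1, fmk5_2, fmk5_3, fmk5_4, Fin.isValue] <;>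
    ring

set_option maxHeartbeats 1000000 in
lemma keyh_2_4 (N : Matrix (Fin 4) (Fin 4) ℝ) (x : Fin 4) :
    EcolV N 2 x - EcolV N 4 x =
      (1/6) * ∑ i1, ∑ i2, ∑ i3, eps5 4 2 i1 i2 i3 * tstar (UrV N i1) (UrV N i2) (UrV N i3) x := by
  fin_cases x <;>
    simp only [sum5h_4_2, EcolV_2, EcolV_4, AmatE_0_0, AmatE_0_1, AmatE_0_2, AmatE_0_3, AmatE_1_0, AmatE_1_1, AmatE_1_2, AmatE_1_3, AmatE_2_0, AmatE_2_1, AmatE_2_2, AmatE_2_3, AmatE_3_0, AmatE_3_1, AmatE_3_2, AmatE_3_3, tstar_e0, tstar_e1, tstar_e2, tstar_e3, UrV_0, UrV_1, UrV_2, UrV_3, UrV_4, fmk4_0, fmk4_1, fmk4_2, fmk4_3, fmk5_0, fmk5_1, fmk5_2, fmk5_3, fmk5_4, Fin.isValue] <;>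
    ring

set_option maxHeartbeats 1000000 in
lemma keyh_3_0 (N : Matrix (Fin 4) (Fin 4) ℝ) (x : Fin 4) :
    EcolV N 3 x - EcolV N 0 x =
      (1/6) * ∑ i1, ∑ i2, ∑ i3, eps5 0 3 i1 i2 i3 * tstar (UrV N i1) (UrV N i2) (UrV N i3) x := by
  fin_cases x <;>
    simp only [sum5h_0_3, EcolV_3, EcolV_0, AmatE_0_0, AmatE_0_1, AmatE_0_2, AmatE_0_3, AmatE_1_0, AmatE_1_1, AmatE_1_2, AmatE_1_3, AmatE_2_0, AmatE_2_1, AmatE_2_2, AmatE_2_3, AmatE_3_0, AmatE_3_1, AmatE_3_2, AmatE_3_3, tstar_e0, tstar_e1, tstar_e2, tstar_e3, UrV_0, UrV_1, UrV_2, UrV_3, UrV_4, fmk4_0, fmk4_1, fmk4_2, fmk4_3, fmk5_0, fmk5_1, fmk5_2, fmk5_3, fmk5_4, Fin.isValue] <;>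
    ring

set_option maxHeartbeats 1000000 in
lemma keyh_3_1 (N : Matrix (Fin 4) (Fin 4) ℝ) (x : Fin 4) :
    EcolV N 3 x - EcolV N 1 x =
      (1/6) * ∑ i1, ∑ i2, ∑ i3, eps5 1 3 i1 i2 i3 * tstar (UrV N i1) (UrV N i2) (UrV N i3) x := by
  fin_cases x <;>
    simp only [sum5h_1_3, EcolV_3, EcolV_1, AmatE_0_0, AmatE_0_1, AmatE_0_2, AmatE_0_3, AmatE_1_0, AmatE_1_1, AmatE_1_2, AmatE_1_3, AmatE_2_0, AmatE_2_1, AmatE_2_2, AmatE_2_3, AmatE_3_0, AmatE_3_1, AmatE_3_2, AmatE_3_3, tstar_e0, tstar_e1, tstar_e2, tstar_e3, UrV_0, UrV_1, UrV_2, UrV_3, UrV_4, fmk4_0, fmk4_1, fmk4_2, fmk4_3, fmk5_0, fmk5_1, fmk5_2, fmk5_3, fmk5_4, Fin.isValue] <;>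
    ring

set_option maxHeartbeats 1000000 in
lemma keyh_3_2 (N : Matrix (Fin 4) (Fin 4) ℝ) (x : Fin 4) :
    EcolV N 3 x - EcolV N 2 x =
      (1/6) * ∑ i1, ∑ i2, ∑ i3, eps5 2 3 i1 i2 i3 * tstar (UrV N i1) (UrV N i2) (UrV N i3) x := by
  fin_cases x <;>
    simp only [sum5h_2_3, EcolV_3, EcolV_2, AmatE_0_0, AmatE_0_1, AmatE_0_2, AmatE_0_3, AmatE_1_0, AmatE_1_1, AmatE_1_2, AmatE_1_3, AmatE_2_0, AmatE_2_1, AmatE_2_2, AmatE_2_3, AmatE_3_0, AmatE_3_1, AmatE_3_2, AmatE_3_3, tstar_e0, tstar_e1, tstar_e2, tstar_e3, UrV_0, UrV_1, UrV_2, UrV_3, UrV_4, fmk4_0, fmk4_1, fmk4_2, fmk4_3, fmk5_0, fmk5_1, fmk5_2, fmk5_3, fmk5_4, Fin.isValue] <;>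
    ring

set_option maxHeartbeats 1000000 in
lemma keyh_3_3 (N : Matrix (Fin 4) (Fin 4) ℝ) (x : Fin 4) :
    EcolV N 3 x - EcolV N 3 x =
      (1/6) * ∑ i1, ∑ i2, ∑ i3, eps5 3 3 i1 i2 i3 * tstar (UrV N i1) (UrV N i2) (UrV N i3) x := by
  fin_cases x <;>
    simp only [sum5h_3_3, EcolV_3, AmatE_0_0, AmatE_0_1, AmatE_0_2, AmatE_0_3, AmatE_1_0, AmatE_1_1, AmatE_1_2, AmatE_1_3, AmatE_2_0, AmatE_2_1, AmatE_2_2, AmatE_2_3, AmatE_3_0, AmatE_3_1, AmatE_3_2, AmatE_3_3, tstar_e0, tstar_e1, tstar_e2, tstar_e3, UrV_0, UrV_1, UrV_2, UrV_3, UrV_4, fmk4_0, fmk4_1, fmk4_2, fmk4_3, fmk5_0, fmk5_1, fmk5_2, fmk5_3, fmk5_4, Fin.isValue] <;>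
    ring

set_option maxHeartbeats 1000000 in
lemma keyh_3_4 (N : Matrix (Fin 4) (Fin 4) ℝ) (x : Fin 4) :
    EcolV N 3 x - EcolV N 4 x =
      (1/6) * ∑ i1, ∑ i2, ∑ i3, eps5 4 3 i1 i2 i3 * tstar (UrV N i1) (UrV N i2) (UrV N i3) x := by
  fin_cases x <;>
    simp only [sum5h_4_3, EcolV_3, EcolV_4, AmatE_0_0, AmatE_0_1, AmatE_0_2, AmatE_0_3, AmatE_1_0, AmatE_1_1, AmatE_1_2, AmatE_1_3, AmatE_2_0, AmatE_2_1, AmatE_2_2, AmatE_2_3, AmatE_3_0, AmatE_3_1, AmatE_3_2, AmatE_3_3, tstar_e0, tstar_e1, tstar_e2, tstar_e3, UrV_0, UrV_1, UrV_2, UrV_3, UrV_4, fmk4_0, fmk4_1, fmk4_2, fmk4_3, fmk5_0, fmk5_1, fmk5_2, fmk5_3, fmk5_4, Fin.isValue] <;>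
    ring

set_option maxHeartbeats 1000000 in
lemma keyh_4_0 (N : Matrix (Fin 4) (Fin 4) ℝ) (x : Fin 4) :
    EcolV N 4 x - EcolV N 0 x =
      (1/6) * ∑ i1, ∑ i2, ∑ i3, eps5 0 4 i1 i2 i3 * tstar (UrV N i1) (UrV N i2) (UrV N i3) x := by
  fin_cases x <;>
    simp only [sum5h_0_4, EcolV_4, EcolV_0, AmatE_0_0, AmatE_0_1, AmatE_0_2, AmatE_0_3, AmatE_1_0, AmatE_1_1, AmatE_1_2, AmatE_1_3, AmatE_2_0, AmatE_2_1, AmatE_2_2, AmatE_2_3, AmatE_3_0, AmatE_3_1, AmatE_3_2, AmatE_3_3, tstar_e0, tstar_e1, tstar_e2, tstar_e3, UrV_0, UrV_1, UrV_2, UrV_3, UrV_4, fmk4_0, fmk4_1, fmk4_2, fmk4_3, fmk5_0, fmk5_1, fmk5_2, fmk5_3, fmk5_4, Fin.isValue] <;>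
    ring

set_option maxHeartbeats 1000000 in
lemma keyh_4_1 (N : Matrix (Fin 4) (Fin 4) ℝ) (x : Fin 4) :
    EcolV N 4 x - EcolV N 1 x =
      (1/6) * ∑ i1, ∑ i2, ∑ i3, eps5 1 4 i1 i2 i3 * tstar (UrV N i1) (UrV N i2) (UrV N i3) x := by
  fin_cases x <;>
    simp only [sum5h_1_4, EcolV_4, EcolV_1, AmatE_0_0, AmatE_0_1, AmatE_0_2, AmatE_0_3, AmatE_1_0, AmatE_1_1, AmatE_1_2, AmatE_1_3, AmatE_2_0, AmatE_2_1, AmatE_2_2, AmatE_2_3, AmatE_3_0, AmatE_3_1, AmatE_3_2, AmatE_3_3, tstar_e0, tstar_e1, tstar_e2, tstar_e3, UrV_0, UrV_1, UrV_2, UrV_3, UrV_4, fmk4_0, fmk4_1, fmk4_2, fmk4_3, fmk5_0, fmk5_1, fmk5_2, fmk5_3, fmk5_4, Fin.isValue] <;>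
    ring

set_option maxHeartbeats 1000000 in
lemma keyh_4_2 (N : Matrix (Fin 4) (Fin 4) ℝ) (x : Fin 4) :
    EcolV N 4 x - EcolV N 2 x =
      (1/6) * ∑ i1, ∑ i2, ∑ i3, eps5 2 4 i1 i2 i3 * tstar (UrV N i1) (UrV N i2) (UrV N i3) x := by
  fin_cases x <;>
    simp only [sum5h_2_4, EcolV_4, EcolV_2, AmatE_0_0, AmatE_0_1, AmatE_0_2, AmatE_0_3, AmatE_1_0, AmatE_1_1, AmatE_1_2, AmatE_1_3, AmatE_2_0, AmatE_2_1, AmatE_2_2, AmatE_2_3, AmatE_3_0, AmatE_3_1, AmatE_3_2, AmatE_3_3, tstar_e0, tstar_e1, tstar_e2, tstar_e3, UrV_0, UrV_1, UrV_2, UrV_3, UrV_4, fmk4_0, fmk4_1, fmk4_2, fmk4_3, fmk5_0, fmk5_1, fmk5_2, fmk5_3, fmk5_4, Fin.isValue] <;>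
    ring

set_option maxHeartbeats 1000000 in
lemma keyh_4_3 (N : Matrix (Fin 4) (Fin 4) ℝ) (x : Fin 4) :
    EcolV N 4 x - EcolV N 3 x =
      (1/6) * ∑ i1, ∑ i2, ∑ i3, eps5 3 4 i1 i2 i3 * tstar (UrV N i1) (UrV N i2) (UrV N i3) x := by
  fin_cases x <;>
    simp only [sum5h_3_4, EcolV_4, EcolV_3, AmatE_0_0, AmatE_0_1, AmatE_0_2, AmatE_0_3, AmatE_1_0, AmatE_1_1, AmatE_1_2, AmatE_1_3, AmatE_2_0, AmatE_2_1, AmatE_2_2, AmatE_2_3, AmatE_3_0, AmatE_3_1, AmatE_3_2, AmatE_3_3, tstar_e0, tstar_e1, tstar_e2, tstar_e3, UrV_0, UrV_1, UrV_2, UrV_3, UrV_4, fmk4_0, fmk4_1, fmk4_2, fmk4_3, fmk5_0, fmk5_1, fmk5_2, fmk5_3, fmk5_4, Fin.isValue] <;>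
    ring

set_option maxHeartbeats 1000000 in
lemma keyh_4_4 (N : Matrix (Fin 4) (Fin 4) ℝ) (x : Fin 4) :
    EcolV N 4 x - EcolV N 4 x =
      (1/6) * ∑ i1, ∑ i2, ∑ i3, eps5 4 4 i1 i2 i3 * tstar (UrV N i1) (UrV N i2) (UrV N i3) x := by
  fin_cases x <;>
    simp only [sum5h_4_4, EcolV_4, AmatE_0_0, AmatE_0_1, AmatE_0_2, AmatE_0_3, AmatE_1_0, AmatE_1_1, AmatE_1_2, AmatE_1_3, AmatE_2_0, AmatE_2_1, AmatE_2_2, AmatE_2_3, AmatE_3_0, AmatE_3_1, AmatE_3_2, AmatE_3_3, tstar_e0, tstar_e1, tstar_e2, tstar_e3, UrV_0, UrV_1, UrV_2, UrV_3, UrV_4, fmk4_0, fmk4_1, fmk4_2, fmk4_3, fmk5_0, fmk5_1, fmk5_2, fmk5_3, fmk5_4, Fin.isValue] <;>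
    ring

lemma keyh (N : Matrix (Fin 4) (Fin 4) ℝ) (j k : Fin 5) (x : Fin 4) :
    EcolV N j x - EcolV N k x =
      (1/6) * ∑ i1, ∑ i2, ∑ i3, eps5 k j i1 i2 i3 * tstar (UrV N i1) (UrV N i2) (UrV N i3) x := by
  fin_cases j <;> fin_cases k
  · exact keyh_0_0 N x
  · exact keyh_0_1 N x
  · exact keyh_0_2 N x
  · exact keyh_0_3 N x
  · exact keyh_0_4 N x
  · exact keyh_1_0 N x
  · exact keyh_1_1 N x
  · exact keyh_1_2 N x
  · exact keyh_1_3 N x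
  · exact keyh_1_4 N x
  · exact keyh_2_0 N x
  · exact keyh_2_1 N x
  · exact keyh_2_2 N x
  · exact keyh_2_3 N x
  · exact keyh_2_4 N x
  · exact keyh_3_0 N x
  · exact keyh_3_1 N x
  · exact keyh_3_2 N x
  · exact keyh_3_3 N x
  · exact keyh_3_4 N x
  · exact keyh_4_0 N x
  · exact keyh_4_1 N x
  · exact keyh_4_2 N x
  · exact keyh_4_3 N x
  · exact keyh_4_4 N x

noncomputable def Mmat (E : Fin 5 → Fin 5 → Fin 4 → ℝ) : Matrix (Fin 4) (Fin 4) ℝ :=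
  Matrix.of fun x r => E (Fin.succ r) 0 x
noncomputable def Nmat (U : Fin 5 → Fin 4 → ℝ) : Matrix (Fin 4) (Fin 4) ℝ :=
  Matrix.of fun m x => U (Fin.succ m) x

end AuxStmt11


/-- inverse formula expressing the co-tetrad in terms of the tetrad. -/
theorem stmt11 (E : Fin 5 → Fin 5 → Fin 4 → ℝ)
    (hanti : ∀ i j, E i j + E j i = 0)
    (hclose : ∀ i j k, E i j + E j k + E k i = 0)
    (hnd : LinearIndependent ℝ ![E 1 0, E 2 0, E 3 0, E 4 0])
    (U : Fin 5 → Fin 4 → ℝ)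
    (hU : ∀ i m k,
      U i ⬝ᵥ E m k = (if m = i then (1 : ℝ) else 0) - (if k = i then (1 : ℝ) else 0)) :
    ∀ j k I, E j k I =
      (det4 (E 1 0) (E 2 0) (E 3 0) (E 4 0) / 6) *
        ∑ i1, ∑ i2, ∑ i3, eps5 k j i1 i2 i3 * tstar (U i1) (U i2) (U i3) I := by
  intro j k I
  have hdot : ∀ i m k', U i ⬝ᵥ E m k' = ∑ x, U i x * E m k' x := fun _ _ _ => rfl
  have h1 : Nmat U * Mmat E = 1 := by
    ext a b
    have hab : (Nmat U * Mmat E) a b = ∑ x, U (Fin.succ a) x * E (Fin.succ b) 0 x := by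
      rw [Matrix.mul_apply]; rfl
    have h := hU (Fin.succ a) (Fin.succ b) 0
    rw [hdot] at h
    rw [hab, h, Matrix.one_apply]
    rw [if_neg (Fin.succ_ne_zero a).symm]
    by_cases hab2 : a = b
    · subst hab2; rw [if_pos rfl, if_pos rfl]; norm_num
    · rw [if_neg (fun hh => hab2 ((Fin.succ_inj.mp hh).symm)), if_neg hab2]; norm_num
  have h2 : Mmat E * Nmat U = 1 := mul_eq_one_comm.mp h1
  have hdet1 : (Mmat E).det * (Nmat U).det = 1 := by
    rw [← Matrix.det_mul, h2, Matrix.det_one]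
  have hA' : Matrix.of (fun x d => Amat (Nmat U) x d) = (Nmat U).det • Mmat E := by
    calc Matrix.of (fun x d => Amat (Nmat U) x d)
        = (Mmat E * Nmat U) * Matrix.of (fun x d => Amat (Nmat U) x d) := by rw [h2, one_mul]
      _ = Mmat E * (Nmat U * Matrix.of (fun x d => Amat (Nmat U) x d)) := by rw [Matrix.mul_assoc]
      _ = Mmat E * ((Nmat U).det • 1) := by rw [NAmat]
      _ = (Nmat U).det • Mmat E := by rw [Matrix.mul_smul, Matrix.mul_one]
  have hM' : ∀ x m', Mmat E x m' = (Mmat E).det * Amat (Nmat U) x m' := by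
    intro x m'
    have h3 : Amat (Nmat U) x m' = (Nmat U).det * Mmat E x m' := by
      have h4 := congrFun (congrFun hA' x) m'
      simpa [Matrix.smul_apply, smul_eq_mul] using h4
    calc Mmat E x m' = ((Mmat E).det * (Nmat U).det) * Mmat E x m' := by rw [hdet1, one_mul]
      _ = (Mmat E).det * Amat (Nmat U) x m' := by rw [h3]; ring
  have hU0 : ∀ x, U 0 x = -(U 1 x + U 2 x + U 3 x + U 4 x) := by
    set w : Fin 4 → ℝ := fun x => U 0 x + (U 1 x + (U 2 x + (U 3 x + U 4 x))) with hw
    have hwM : w ᵥ* Mmat E = 0 := by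
      funext m
      have hvm : (w ᵥ* Mmat E) m = ∑ x, w x * Mmat E x m := rfl
      have h0 := hU 0 (Fin.succ m) 0
      have hh1 := hU 1 (Fin.succ m) 0
      have hh2 := hU 2 (Fin.succ m) 0
      have hh3 := hU 3 (Fin.succ m) 0
      have hh4 := hU 4 (Fin.succ m) 0
      rw [hdot] at h0 hh1 hh2 hh3 hh4
      have hterm : ∀ x : Fin 4, w x * Mmat E x m =
          U 0 x * E (Fin.succ m) 0 x + (U 1 x * E (Fin.succ m) 0 x +
          (U 2 x * E (Fin.succ m) 0 x + (U 3 x * E (Fin.succ m) 0 x +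
          U 4 x * E (Fin.succ m) 0 x))) := by
        intro x
        show (U 0 x + (U 1 x + (U 2 x + (U 3 x + U 4 x)))) * E (Fin.succ m) 0 x = _
        ring
      rw [hvm, Finset.sum_congr rfl (fun x _ => hterm x), Finset.sum_add_distrib,
        Finset.sum_add_distrib, Finset.sum_add_distrib, Finset.sum_add_distrib,
        h0, hh1, hh2, hh3, hh4, Pi.zero_apply]
      fin_cases m <;> simp [fsucc4_0, fsucc4_1, fsucc4_2, fsucc4_3, fsuccn_0, fsuccn_1, fsuccn_2, fsuccn_3]
    have hw0 : w = 0 := by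
      have h5 : w ᵥ* (Mmat E * Nmat U) = w := by rw [h2, Matrix.vecMul_one]
      rw [← Matrix.vecMul_vecMul, hwM, Matrix.zero_vecMul] at h5
      exact h5.symm
    intro x
    have h6 := congrFun hw0 x
    simp only [hw, Pi.zero_apply] at h6
    linarith
  have hUr : ∀ i, U i = UrV (Nmat U) i := by
    intro i
    fin_cases i
    · show U 0 = UrV (Nmat U) 0
      funext x
      rw [hU0 x, UrV_0]
      rfl
    · rfl
    · rfl
    · rfl
    · rfl
  have goal2 : E j k I = E j 0 I - E k 0 I := by
    have hc := congrFun (hclose j k 0) I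
    have ha1 := congrFun (hanti k 0) I
    have ha2 := congrFun (hanti 0 j) I
    simp only [Pi.add_apply, Pi.zero_apply] at hc ha1 ha2
    linarith
  have hF : ∀ p : Fin 5, E p 0 I = (Mmat E).det * EcolV (Nmat U) p I := by
    intro p
    fin_cases p
    · show E 0 0 I = (Mmat E).det * EcolV (Nmat U) 0 I
      have h00 := congrFun (hanti 0 0) I
      simp only [Pi.add_apply, Pi.zero_apply] at h00
      rw [EcolV_0, mul_zero]
      linarith
    · show E 1 0 I = (Mmat E).det * EcolV (Nmat U) 1 I
      rw [EcolV_1]; exact hM' I 0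
    · show E 2 0 I = (Mmat E).det * EcolV (Nmat U) 2 I
      rw [EcolV_2]; exact hM' I 1
    · show E 3 0 I = (Mmat E).det * EcolV (Nmat U) 3 I
      rw [EcolV_3]; exact hM' I 2
    · show E 4 0 I = (Mmat E).det * EcolV (Nmat U) 4 I
      rw [EcolV_4]; exact hM' I 3
  have hdet4 : det4 (E 1 0) (E 2 0) (E 3 0) (E 4 0) = (Mmat E).det := by
    unfold det4 Mmat
    congr 1
    ext x r
    fin_cases r <;> rfl
  have hS : (∑ i1, ∑ i2, ∑ i3, eps5 k j i1 i2 i3 * tstar (U i1) (U i2) (U i3) I)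
      = ∑ i1, ∑ i2, ∑ i3, eps5 k j i1 i2 i3 *
          tstar (UrV (Nmat U) i1) (UrV (Nmat U) i2) (UrV (Nmat U) i3) I := by
    simp only [hUr]
  rw [goal2, hF j, hF k, hdet4, hS]
  linear_combination (Mmat E).det * keyh (Nmat U) j k I
end

section
/- With E_{ij} a nondegenerate closed co-tetrad on five labels, U^i its dual tetrad, and V₄ = det(E_{21},…,E_{51}), the bivector identity V₄ (U^i ∧ U^j) = ∑_{m,n} ε^{kijmn} ½ ε^{IJ}{}_{MN} E_{mk}^M E_{nk}^N holds for any k ≠ i, j; i.e., V₄·(U^i ∧ U^j) = ⋆(E_{mk} ∧ E_{nk}) where {i,j,k,m,n} = {1,…,5} with appropriate orientation sign. -/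
open Matrix Complex Finset

/- ===== auxiliary machinery ===== -/

/-- integer version of the pairwise-sign product on five labels -/
def epsP (a b c d e : Fin 5) : ℤ :=
  (((b:ℕ):ℤ) - ((a:ℕ):ℤ)).sign * (((c:ℕ):ℤ) - ((a:ℕ):ℤ)).sign * (((d:ℕ):ℤ) - ((a:ℕ):ℤ)).sign *
  (((e:ℕ):ℤ) - ((a:ℕ):ℤ)).sign * (((c:ℕ):ℤ) - ((b:ℕ):ℤ)).sign * (((d:ℕ):ℤ) - ((b:ℕ):ℤ)).sign *
  (((e:ℕ):ℤ) - ((b:ℕ):ℤ)).sign * (((d:ℕ):ℤ) - ((c:ℕ):ℤ)).sign * (((e:ℕ):ℤ) - ((c:ℕ):ℤ)).sign *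
  (((e:ℕ):ℤ) - ((d:ℕ):ℤ)).sign

/-- integer version of the pairwise-sign product on four labels -/
def eps4P (a b c d : Fin 4) : ℤ :=
  (((b:ℕ):ℤ) - ((a:ℕ):ℤ)).sign * (((c:ℕ):ℤ) - ((a:ℕ):ℤ)).sign * (((d:ℕ):ℤ) - ((a:ℕ):ℤ)).sign *
  (((c:ℕ):ℤ) - ((b:ℕ):ℤ)).sign * (((d:ℕ):ℤ) - ((b:ℕ):ℤ)).sign * (((d:ℕ):ℤ) - ((c:ℕ):ℤ)).sign

/-- integer delta coefficient -/
def dZ (i : Fin 5) (p : Fin 4) : ℤ :=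
  (if (p.succ : Fin 5) = i then 1 else 0) - (if (0:Fin 5) = i then 1 else 0)

lemma eps4_cast (a b c d : Fin 4) : eps4 a b c d = ((eps4P a b c d : ℤ) : ℝ) := by
  rw [eps4, levi, eps4P]
  rw [show (Finset.univ.filter (fun p : Fin 4 × Fin 4 => p.1 < p.2)) =
    ({((0:Fin 4),(1:Fin 4)),(0,2),(0,3),(1,2),(1,3),(2,3)} : Finset (Fin 4 × Fin 4)) from by decide]
  simp [Finset.prod_insert, Finset.mem_insert]
  push_cast
  ring

lemma eps5_cast (a b c d e : Fin 5) : eps5 a b c d e = ((epsP a b c d e : ℤ) : ℝ) := by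
  rw [eps5, levi, epsP]
  rw [show (Finset.univ.filter (fun p : Fin 5 × Fin 5 => p.1 < p.2)) =
    ({((0:Fin 5),(1:Fin 5)),(0,2),(0,3),(0,4),(1,2),(1,3),(1,4),(2,3),(2,4),(3,4)} :
      Finset (Fin 5 × Fin 5)) from by decide]
  simp [Finset.prod_insert, Finset.mem_insert]
  push_cast
  ring

lemma det4_eq (a b c d : Fin 4 → ℝ) : det4 a b c d =
    a 0*b 1*c 2*d 3 - a 0*b 1*c 3*d 2 - a 0*b 2*c 1*d 3 + a 0*b 2*c 3*d 1 + a 0*b 3*c 1*d 2 - a 0*b 3*c 2*d 1 - a 1*b 0*c 2*d 3 + a 1*b 0*c 3*d 2 + a 1*b 2*c 0*d 3 - a 1*b 2*c 3*d 0 - a 1*b 3*c 0*d 2 + a 1*b 3*c 2*d 0 + a 2*b 0*c 1*d 3 - a 2*b 0*c 3*d 1 - a 2*b 1*c 0*d 3 + a 2*b 1*c 3*d 0 + a 2*b 3*c 0*d 1 - a 2*b 3*c 1*d 0 - a 3*b 0*c 1*d 2 + a 3*b 0*c 2*d 1 + a 3*b 1*c 0*d 2 - a 3*b 1*c 2*d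 0 - a 3*b 2*c 0*d 1 + a 3*b 2*c 1*d 0 := by
  simp [det4, Matrix.det_succ_row_zero, Fin.sum_univ_succ, Matrix.det_fin_three,
    show (Fin.succ 2 : Fin 4) = 3 from rfl,
    show ((2:Fin 4).succAbove (2:Fin 3)) = 3 from by decide,
    show ((1:Fin 4).succAbove (2:Fin 3)) = 3 from by decide,
    show ((3:Fin 4).succAbove (2:Fin 3)) = 2 from by decide,
    show (Fin.castSucc (2:Fin 3) : Fin 4) = 2 from by decide]
  ring

set_option maxHeartbeats 2000000 in
lemma key1 (a b c d : Fin 4 → ℝ) :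
    (∑ I, ∑ J, ∑ M, ∑ N, eps4 I J M N * a I * b J * c M * d N) = det4 a b c d := by
  simp only [Fin.sum_univ_four, eps4_cast, eps4P, det4_eq]
  norm_num [Int.sign_eq_one_of_pos, Int.sign_eq_neg_one_of_neg,
    show ((2:Fin 4):ℕ) = 2 from rfl, show ((3:Fin 4):ℕ) = 3 from rfl]
  ring

set_option maxHeartbeats 2000000 in
lemma key2 (a b x y : Fin 4 → ℝ) :
    (∑ c, (∑ d, a d * (∑ M, ∑ N, eps4 d c M N * x M * y N)) * b c) = det4 a b x y := by
  simp only [Fin.sum_univ_four, eps4_cast, eps4P, det4_eq]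
  norm_num [Int.sign_eq_one_of_pos, Int.sign_eq_neg_one_of_neg,
    show ((2:Fin 4):ℕ) = 2 from rfl, show ((3:Fin 4):ℕ) = 3 from rfl]
  ring

lemma det4_sub (a b x y z : Fin 4 → ℝ) :
    det4 a b (x - z) (y - z) = det4 a b x y - det4 a b x z - det4 a b z y + det4 a b z z := by
  simp only [det4_eq, Pi.sub_apply]
  ring

lemma det4_alt (v : Fin 4 → Fin 4 → ℝ) :
    det4 (v 0) (v 1) (v 2) (v 3) = Matrix.detRowAlternating v := by
  have h : (Matrix.of fun I r => ![v 0, v 1, v 2, v 3] r I) = (Matrix.of fun r I => v r I)ᵀ := by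
    ext I r
    fin_cases r <;> rfl
  rw [det4, h, Matrix.det_transpose]
  rfl

set_option maxRecDepth 100000 in
lemma epsP_eq_zero₁ : ∀ (g : Fin 4 → Fin 5) (r : Fin 4), g r = 0 →
    epsP 0 (g 0) (g 1) (g 2) (g 3) = 0 := by decide

set_option maxRecDepth 100000 in
lemma epsP_eq_zero₂ : ∀ (g : Fin 4 → Fin 5) (r s : Fin 4), r ≠ s → g r = g s →
    epsP 0 (g 0) (g 1) (g 2) (g 3) = 0 := by decide

lemma epsP_sign : ∀ σ : Equiv.Perm (Fin 4),
    ((Equiv.Perm.sign σ : ℤˣ) : ℤ) = epsP 0 (σ 0).succ (σ 1).succ (σ 2).succ (σ 3).succ := by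
  decide

set_option maxRecDepth 10000 in
lemma detA (w : Fin 5 → Fin 4 → ℝ) (h0 : w 0 = 0) (a b c d : Fin 5) :
    det4 (w a) (w b) (w c) (w d) = ((epsP 0 a b c d : ℤ) : ℝ) * det4 (w 1) (w 2) (w 3) (w 4) := by
  set g : Fin 4 → Fin 5 := ![a, b, c, d] with hg
  have h1 : det4 (w a) (w b) (w c) (w d) = Matrix.detRowAlternating (fun r => w (g r)) := by
    exact det4_alt (fun r => w (g r))
  have h2 : det4 (w 1) (w 2) (w 3) (w 4) =
      Matrix.detRowAlternating (fun r : Fin 4 => w r.succ) := by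
    simpa using det4_alt (fun r : Fin 4 => w r.succ)
  have habcd : epsP 0 a b c d = epsP 0 (g 0) (g 1) (g 2) (g 3) := rfl
  by_cases hz : ∃ r, g r = 0
  · obtain ⟨r, hr⟩ := hz
    rw [h1, habcd, epsP_eq_zero₁ g r hr]
    rw [AlternatingMap.map_coord_zero _ r (by show w (g r) = 0; rw [hr, h0])]
    try norm_num
  by_cases hinj : Function.Injective g
  · push_neg at hz
    let τ : Fin 4 → Fin 4 := fun r => (g r).pred (hz r)
    have hτs : ∀ r, (τ r).succ = g r := fun r => Fin.succ_pred _ _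
    have hτinj : Function.Injective τ := by
      intro r s h
      apply hinj
      rw [← hτs r, ← hτs s, h]
    let σ : Equiv.Perm (Fin 4) := Equiv.ofBijective τ (Finite.injective_iff_bijective.mp hτinj)
    have hσ : ∀ r, σ r = τ r := fun r => rfl
    have hv : (fun r => w (g r)) = (fun r : Fin 4 => w r.succ) ∘ σ := by
      funext r
      show w (g r) = w ((σ r).succ)
      rw [hσ, hτs]
    rw [h1, hv, AlternatingMap.map_perm, h2, Units.smul_def]
    have hsg : ((Equiv.Perm.sign σ : ℤˣ) : ℤ) = epsP 0 a b c d := by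
      rw [epsP_sign σ, habcd]
      congr 1 <;> rw [hσ, hτs]
    rw [← hsg, zsmul_eq_mul]
  · obtain ⟨r, s, hgrs, hrs⟩ := Function.not_injective_iff.mp hinj
    rw [h1, habcd, epsP_eq_zero₂ g r s hrs hgrs]
    rw [AlternatingMap.map_eq_zero_of_eq _ _ (by show w (g r) = w (g s); rw [hgrs]) hrs]
    try norm_num

set_option maxHeartbeats 4000000 in
lemma core : ∀ (i j k : Fin 5) (p q : Fin 4), k ≠ i → k ≠ j →
    2 * (dZ i p * dZ j q - dZ i q * dZ j p)
      = ∑ m, ∑ n, epsP k i j m n *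
          (epsP 0 p.succ q.succ m n - epsP 0 p.succ q.succ m k -
            epsP 0 p.succ q.succ k n + epsP 0 p.succ q.succ k k) := by decide


set_option maxHeartbeats 2000000 in
/-- the bivector identity V₄ (Uⁱ ∧ Uʲ) = ∑ₘₙ ε^{kijmn} ⋆(E_{mk} ∧ E_{nk})/2. -/
theorem stmt12 (E : Fin 5 → Fin 5 → Fin 4 → ℝ)
    (hanti : ∀ i j, E i j + E j i = 0)
    (hclose : ∀ i j k, E i j + E j k + E k i = 0)
    (hnd : LinearIndependent ℝ ![E 1 0, E 2 0, E 3 0, E 4 0])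
    (U : Fin 5 → Fin 4 → ℝ)
    (hU : ∀ i m k,
      U i ⬝ᵥ E m k = (if m = i then (1 : ℝ) else 0) - (if k = i then (1 : ℝ) else 0)) :
    ∀ i j k, k ≠ i → k ≠ j → ∀ I J,
      det4 (E 1 0) (E 2 0) (E 3 0) (E 4 0) * (U i I * U j J - U i J * U j I) =
        ∑ m, ∑ n, eps5 k i j m n *
          ((1 / 2) * ∑ M, ∑ N, eps4 I J M N * E m k M * E n k N) := by
  intro i j k hki hkj I J
  have h00 : E 0 0 = 0 := by
    have h := hanti 0 0
    have h2 : (2 : ℝ) • E 0 0 = 0 := by rw [two_smul]; exact h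
    simpa using (smul_eq_zero.mp h2).resolve_left (by norm_num)
  have hEmk : ∀ m l : Fin 5, E m l = E m 0 - E l 0 := by
    intro m l
    funext I'
    have h1 := congrFun (hclose m l 0) I'
    have h2 := congrFun (hanti 0 m) I'
    simp only [Pi.add_apply, Pi.zero_apply, Pi.sub_apply] at h1 h2 ⊢
    linarith
  have hUd : ∀ l (r : Fin 4), (∑ d, E r.succ 0 d * U l d) =
      (if (r.succ : Fin 5) = l then (1:ℝ) else 0) - (if (0:Fin 5) = l then (1:ℝ) else 0) := by
    intro l r
    rw [← hU l r.succ 0, dotProduct]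
    exact Finset.sum_congr rfl (fun x _ => mul_comm _ _)
  set V : ℝ := det4 (E 1 0) (E 2 0) (E 3 0) (E 4 0) with hV
  have hdetA : ∀ a b c d : Fin 5, det4 (E a 0) (E b 0) (E c 0) (E d 0)
      = ((epsP 0 a b c d : ℤ) : ℝ) * V :=
    fun a b c d => detA (fun l => E l 0) h00 a b c d
  have hdd : ∀ l (r : Fin 4),
      (if (r.succ : Fin 5) = l then (1:ℝ) else 0) - (if (0:Fin 5) = l then (1:ℝ) else 0)
        = ((dZ l r : ℤ) : ℝ) := by
    intro l r
    simp only [dZ]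
    push_cast [apply_ite (fun z : ℤ => (z : ℝ))]
    rfl
  set M : Matrix (Fin 4) (Fin 4) ℝ := Matrix.of fun I' r => E r.succ 0 I' with hM
  have hMunit : IsUnit M := by
    rw [← Matrix.linearIndependent_cols_iff_isUnit]
    have hrows : (fun r : Fin 4 => Mᵀ r) = ![E 1 0, E 2 0, E 3 0, E 4 0] := by
      funext r; fin_cases r <;> rfl
    show LinearIndependent ℝ (fun r : Fin 4 => Mᵀ r); rw [hrows]; exact hnd
  set A : Matrix (Fin 4) (Fin 4) ℝ := Matrix.of (fun I' J' =>
    V * (U i I' * U j J' - U i J' * U j I')) with hA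
  set X : Fin 5 → Fin 5 → Matrix (Fin 4) (Fin 4) ℝ :=
    fun m n => Matrix.of (fun I' J' => ∑ M', ∑ N', eps4 I' J' M' N' * E m k M' * E n k N') with hX
  set B : Matrix (Fin 4) (Fin 4) ℝ := ∑ m, ∑ n, (eps5 k i j m n * (1/2)) • X m n with hB
  have hMAM : Mᵀ * A * M = Mᵀ * B * M := by
    ext p q
    have hL : (Mᵀ * A * M) p q =
        V * (((dZ i p : ℤ):ℝ) * ((dZ j q : ℤ):ℝ) - ((dZ j p : ℤ):ℝ) * ((dZ i q : ℤ):ℝ)) := by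
      simp only [Matrix.mul_apply, Matrix.transpose_apply, hA, hM, Matrix.of_apply]
      have hinner : ∀ c, (∑ d, E p.succ 0 d * (V * (U i d * U j c - U i c * U j d)))
          = V * (((dZ i p : ℤ):ℝ) * U j c - ((dZ j p : ℤ):ℝ) * U i c) := by
        intro c
        calc (∑ d, E p.succ 0 d * (V * (U i d * U j c - U i c * U j d)))
            = ∑ d, ((V * U j c) * (E p.succ 0 d * U i d)
              - (V * U i c) * (E p.succ 0 d * U j d)) :=
              Finset.sum_congr rfl (fun d _ => by ring)
          _ = (V * U j c) * (∑ d, E p.succ 0 d * U i d)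
              - (V * U i c) * (∑ d, E p.succ 0 d * U j d) := by
              rw [Finset.sum_sub_distrib, Finset.mul_sum, Finset.mul_sum]
          _ = _ := by rw [hUd i p, hUd j p, hdd i p, hdd j p]; ring
      calc (∑ c, (∑ d, E p.succ 0 d * (V * (U i d * U j c - U i c * U j d))) * E q.succ 0 c)
          = ∑ c, (V * (((dZ i p : ℤ):ℝ) * U j c - ((dZ j p : ℤ):ℝ) * U i c)) * E q.succ 0 c :=
            Finset.sum_congr rfl (fun c _ => by rw [hinner])
        _ = ∑ c, ((V * ((dZ i p : ℤ):ℝ)) * (E q.succ 0 c * U j c)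
            - (V * ((dZ j p : ℤ):ℝ)) * (E q.succ 0 c * U i c)) :=
            Finset.sum_congr rfl (fun c _ => by ring)
        _ = (V * ((dZ i p : ℤ):ℝ)) * (∑ c, E q.succ 0 c * U j c)
            - (V * ((dZ j p : ℤ):ℝ)) * (∑ c, E q.succ 0 c * U i c) := by
            rw [Finset.sum_sub_distrib, Finset.mul_sum, Finset.mul_sum]
        _ = _ := by rw [hUd j q, hUd i q, hdd j q, hdd i q]; ring
    have hXval : ∀ m n : Fin 5, (Mᵀ * X m n * M) p q =
        ((epsP 0 p.succ q.succ m n - epsP 0 p.succ q.succ m k -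
          epsP 0 p.succ q.succ k n + epsP 0 p.succ q.succ k k : ℤ) : ℝ) * V := by
      intro m n
      have e1 : (Mᵀ * X m n * M) p q =
          ∑ c, (∑ d, E p.succ 0 d * (∑ M', ∑ N', eps4 d c M' N' * E m k M' * E n k N'))
            * E q.succ 0 c := by
        simp only [Matrix.mul_apply, Matrix.transpose_apply, hX, hM, Matrix.of_apply]
      rw [e1, key2 (E p.succ 0) (E q.succ 0) (E m k) (E n k), hEmk m k, hEmk n k,
        det4_sub (E p.succ 0) (E q.succ 0) (E m 0) (E n 0) (E k 0),
        hdetA p.succ q.succ m n, hdetA p.succ q.succ m k,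
        hdetA p.succ q.succ k n, hdetA p.succ q.succ k k]
      push_cast
      ring
    have hR : (Mᵀ * B * M) p q
        = ∑ m, ∑ n, (eps5 k i j m n * (1/2)) * ((Mᵀ * X m n * M) p q) := by
      rw [hB]
      simp only [Matrix.mul_sum, Matrix.sum_mul, Matrix.mul_smul, Matrix.smul_mul,
        Matrix.sum_apply, Matrix.smul_apply, smul_eq_mul]
    rw [hL, hR]
    simp only [hXval, eps5_cast]
    have h1 : ∀ m n : Fin 5,
        (((epsP k i j m n : ℤ):ℝ) * (1/2)) *
          (((epsP 0 p.succ q.succ m n - epsP 0 p.succ q.succ m k -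
            epsP 0 p.succ q.succ k n + epsP 0 p.succ q.succ k k : ℤ):ℝ) * V)
        = ((epsP k i j m n * (epsP 0 p.succ q.succ m n - epsP 0 p.succ q.succ m k -
            epsP 0 p.succ q.succ k n + epsP 0 p.succ q.succ k k) : ℤ):ℝ) * (V * (1/2)) := by
      intro m n
      push_cast
      ring
    simp only [h1]
    simp only [← Finset.sum_mul]
    simp only [← Int.cast_sum]
    rw [← core i j k p q hki hkj]
    push_cast
    ring
  have hAB : A = B := by
    have e1 : Mᵀ * (A * M) = Mᵀ * (B * M) := by
      rw [← Matrix.mul_assoc, ← Matrix.mul_assoc]; exact hMAM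
    exact hMunit.mul_right_cancel (((Matrix.isUnit_transpose M).mpr hMunit).mul_left_cancel e1)
  have hIJ : A I J = B I J := by rw [hAB]
  have hgoalL : V * (U i I * U j J - U i J * U j I) = A I J := rfl
  have hgoalR : B I J = ∑ m, ∑ n, eps5 k i j m n *
      ((1 / 2) * ∑ M', ∑ N', eps4 I J M' N' * E m k M' * E n k N') := by
    rw [hB]
    simp only [Matrix.sum_apply, Matrix.smul_apply, hX, Matrix.of_apply, smul_eq_mul]
    exact Finset.sum_congr rfl (fun m _ => Finset.sum_congr rfl (fun n _ => by ring))
  exact hgoalL.trans (hIJ.trans hgoalR)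
end

section
/- Let E and E' be two nondegenerate co-tetrads for the same 4-simplex (labels 1,…,5), i.e. both satisfy antisymmetry, triangle closure, and suppose that for some global signs they give the same bivectors: ε ⋆(E_{mk}∧E_{nk}) = ε' ⋆(E'_{mk}∧E'_{nk}) for all appropriate index assignments. Then if there is an SO(4) matrix relating them edgewise, the two co-tetrads are equal up to a global sign: E'_{ij} = ±E_{ij} for all i,j with a sign independent of i,j. -/
open Matrix Complex Finset

def eps4Z (i j k l : Fin 4) : ℤ :=
  ∏ p ∈ Finset.univ.filter (fun p : Fin 4 × Fin 4 => p.1 < p.2),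
    (((![i,j,k,l] p.2 : ℕ) : ℤ) - ((![i,j,k,l] p.1 : ℕ) : ℤ)).sign

lemma eps4_cast_s14 (i j k l : Fin 4) : eps4 i j k l = ((eps4Z i j k l : ℤ) : ℝ) := by
  rw [eps4, levi, eps4Z]; push_cast; rfl

set_option maxHeartbeats 1000000 in
lemma contrZ : ∀ A B K L : Fin 4, (∑ I, ∑ J, eps4Z A B I J * eps4Z I J K L)
    = 2 * ((if A = K then 1 else 0) * (if B = L then 1 else 0)
         - (if A = L then 1 else 0) * (if B = K then 1 else 0)) := by decide

lemma interchange (f : Fin 4 → Fin 4 → Fin 4 → Fin 4 → ℝ) :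
    ∑ I, ∑ J, ∑ K, ∑ L, f I J K L = ∑ K, ∑ L, ∑ I, ∑ J, f I J K L := by
  simp_rw [← Fintype.sum_prod_type']
  exact Fintype.sum_equiv ⟨fun x => (x.2.2.1, x.2.2.2, x.1, x.2.1),
    fun y => (y.2.2.1, y.2.2.2, y.1, y.2.1), fun ⟨a,b,c,d⟩ => rfl, fun ⟨a,b,c,d⟩ => rfl⟩
    _ _ (fun x => rfl)

lemma contractR (X Y : Fin 4 → ℝ) (A B : Fin 4) :
    (∑ I, ∑ J, eps4 A B I J * (∑ K, ∑ L, eps4 I J K L * X K * Y L))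
      = 2 * (X A * Y B - X B * Y A) := by
  have key : ∀ K L : Fin 4, (∑ I, ∑ J, eps4 A B I J * eps4 I J K L)
      = 2 * ((if A = K then (1:ℝ) else 0) * (if B = L then 1 else 0)
           - (if A = L then 1 else 0) * (if B = K then 1 else 0)) := by
    intro K L
    have h := contrZ A B K L
    simp only [eps4_cast_s14]
    exact_mod_cast congrArg (fun z : ℤ => (z : ℝ)) h
  calc (∑ I, ∑ J, eps4 A B I J * (∑ K, ∑ L, eps4 I J K L * X K * Y L))
      = ∑ I, ∑ J, ∑ K, ∑ L, eps4 A B I J * (eps4 I J K L * X K * Y L) := by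
        simp_rw [Finset.mul_sum]
    _ = ∑ K, ∑ L, ∑ I, ∑ J, eps4 A B I J * (eps4 I J K L * X K * Y L) := interchange _
    _ = ∑ K, ∑ L, (∑ I, ∑ J, eps4 A B I J * eps4 I J K L) * (X K * Y L) := by
        simp_rw [Finset.sum_mul, mul_assoc]
    _ = ∑ K, ∑ L, (2 * ((if A = K then (1:ℝ) else 0) * (if B = L then 1 else 0)
           - (if A = L then 1 else 0) * (if B = K then 1 else 0))) * (X K * Y L) := by
        exact Finset.sum_congr rfl fun K _ => Finset.sum_congr rfl fun L _ => by rw [key]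
    _ = 2 * (X A * Y B - X B * Y A) := by
        simp only [mul_sub, sub_mul, mul_ite, ite_mul, mul_zero, zero_mul, mul_one, one_mul,
          Finset.sum_sub_distrib]
        simp [Finset.sum_ite_eq, Finset.sum_ite_eq']
        try ring
def vmap : Fin 4 → Fin 5 := ![1, 2, 3, 4]


set_option maxHeartbeats 1000000 in
/-- two nondegenerate co-tetrads giving the same bivectors (up to global signs)
and related edgewise by an SO(4) matrix agree up to a global sign. -/
theorem stmt14 (E E' : Fin 5 → Fin 5 → Fin 4 → ℝ) (e e' : ℝ)
    (he : e = 1 ∨ e = -1) (he' : e' = 1 ∨ e' = -1)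
    (hanti : ∀ i j, E i j + E j i = 0)
    (hanti' : ∀ i j, E' i j + E' j i = 0)
    (hclose : ∀ i j k, E i j + E j k + E k i = 0)
    (hclose' : ∀ i j k, E' i j + E' j k + E' k i = 0)
    (hnd : LinearIndependent ℝ ![E 1 0, E 2 0, E 3 0, E 4 0])
    (hnd' : LinearIndependent ℝ ![E' 1 0, E' 2 0, E' 3 0, E' 4 0])
    (hbiv : ∀ m n k I J,
      e * (∑ K, ∑ L, eps4 I J K L * E m k K * E n k L) =
        e' * (∑ K, ∑ L, eps4 I J K L * E' m k K * E' n k L))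
    (hR : ∃ R : Matrix (Fin 4) (Fin 4) ℝ,
      Rᵀ * R = 1 ∧ R.det = 1 ∧ ∀ i j, E' i j = R.mulVec (E i j)) :
    ∃ s : ℝ, (s = 1 ∨ s = -1) ∧ ∀ i j, E' i j = s • E i j := by
  classical
  have he2' : e' * e' = 1 := by rcases he' with h | h <;> rw [h] <;> norm_num
  have hsg1 : e * e' = 1 ∨ e * e' = -1 := by
    rcases he with h | h <;> rcases he' with h' | h' <;> rw [h, h'] <;> norm_num
  have hsg0 : e * e' ≠ 0 := by rcases hsg1 with h | h <;> rw [h] <;> norm_num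
  -- wedge equality from the bivector equality
  have wedge : ∀ m n : Fin 5, ∀ A B : Fin 4,
      (e * e') * (E m 0 A * E n 0 B - E m 0 B * E n 0 A)
        = E' m 0 A * E' n 0 B - E' m 0 B * E' n 0 A := by
    intro m n A B
    have h1 := contractR (E m 0) (E n 0) A B
    have h2 := contractR (E' m 0) (E' n 0) A B
    have pull : ∀ (c : ℝ) (W : Fin 4 → Fin 4 → ℝ),
        (∑ I, ∑ J, eps4 A B I J * (c * W I J)) = c * ∑ I, ∑ J, eps4 A B I J * W I J := by
      intro c W
      rw [Finset.mul_sum]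
      refine Finset.sum_congr rfl fun I _ => ?_
      rw [Finset.mul_sum]
      exact Finset.sum_congr rfl fun J _ => by ring
    have h3 : (∑ I, ∑ J, eps4 A B I J * (e * (∑ K, ∑ L, eps4 I J K L * E m 0 K * E n 0 L)))
        = ∑ I, ∑ J, eps4 A B I J * (e' * (∑ K, ∑ L, eps4 I J K L * E' m 0 K * E' n 0 L)) :=
      Finset.sum_congr rfl fun I _ => Finset.sum_congr rfl fun J _ => by rw [hbiv m n 0 I J]
    rw [pull, pull, h1, h2] at h3
    linear_combination (e' / 2) * h3 + (E' m 0 A * E' n 0 B - E' m 0 B * E' n 0 A) * he2'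
  -- basis from nondegeneracy
  obtain ⟨b, hbcoe⟩ : ∃ b : Module.Basis (Fin 4) ℝ (Fin 4 → ℝ),
      ∀ i, b i = ![E 1 0, E 2 0, E 3 0, E 4 0] i := by
    have cardeq : Fintype.card (Fin 4) = Module.finrank ℝ (Fin 4 → ℝ) := by simp
    exact ⟨basisOfLinearIndependentOfCardEqFinrank hnd cardeq,
      fun i => congrFun (coe_basisOfLinearIndependentOfCardEqFinrank hnd cardeq) i⟩
  have hbv : ∀ i : Fin 4, b i = E (vmap i) 0 := by
    intro i; rw [hbcoe]; fin_cases i <;> rfl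
  obtain ⟨M, hMdef⟩ : ∃ M : Fin 4 → Fin 4 → ℝ,
      ∀ i k, M i k = b.repr (E' (vmap i) 0) k := ⟨_, fun _ _ => rfl⟩
  have hrepr : ∀ i, E' (vmap i) 0 = ∑ k, M i k • b k := by
    intro i; simp only [hMdef]; exact (b.sum_repr _).symm
  have wedgeU : ∀ i j : Fin 4, ∀ A B : Fin 4,
      (e * e') * (b i A * b j B - b i B * b j A)
        = E' (vmap i) 0 A * E' (vmap j) 0 B - E' (vmap i) 0 B * E' (vmap j) 0 A := by
    intro i j A B
    rw [hbv i, hbv j]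
    exact wedge (vmap i) (vmap j) A B
  -- the minors equation
  have minor : ∀ i j k l : Fin 4,
      M i k * M j l - M j k * M i l
        = (e * e') * ((if i = k then (1:ℝ) else 0) * (if j = l then 1 else 0)
              - (if j = k then 1 else 0) * (if i = l then 1 else 0)) := by
    intro i j k l
    have vec1 : ∀ B : Fin 4, ((e * e') * b j B) • b i - ((e * e') * b i B) • b j
        = (E' (vmap j) 0 B) • E' (vmap i) 0 - (E' (vmap i) 0 B) • E' (vmap j) 0 := by
      intro B; funext A
      simp only [Pi.sub_apply, Pi.smul_apply, smul_eq_mul]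
      linear_combination wedgeU i j A B
    have co1 : ∀ B k0 : Fin 4,
        (e * e') * b j B * (if i = k0 then (1:ℝ) else 0)
          - (e * e') * b i B * (if j = k0 then 1 else 0)
          = E' (vmap j) 0 B * M i k0 - E' (vmap i) 0 B * M j k0 := by
      intro B k0
      have h := congrArg (fun w => b.repr w k0) (vec1 B)
      simp only [map_sub, _root_.map_smul, Finsupp.coe_sub, Pi.sub_apply, Finsupp.coe_smul,
        Pi.smul_apply, smul_eq_mul, Module.Basis.repr_self, Finsupp.single_apply] at h
      simp only [hMdef]
      linear_combination h
    have vec2 : ∀ k0 : Fin 4,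
        ((e * e') * (if i = k0 then (1:ℝ) else 0)) • b j
          - ((e * e') * (if j = k0 then 1 else 0)) • b i
          = (M i k0) • E' (vmap j) 0 - (M j k0) • E' (vmap i) 0 := by
      intro k0; funext B
      simp only [Pi.sub_apply, Pi.smul_apply, smul_eq_mul]
      linear_combination co1 B k0
    have h2c := congrArg (fun w => b.repr w l) (vec2 k)
    simp only [map_sub, _root_.map_smul, Finsupp.coe_sub, Pi.sub_apply, Finsupp.coe_smul,
      Pi.smul_apply, smul_eq_mul, Module.Basis.repr_self, Finsupp.single_apply] at h2c
    simp only [← hMdef] at h2c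
    linear_combination -h2c
  -- off-diagonal entries vanish
  have hoff : ∀ j c : Fin 4, j ≠ c → M j c = 0 := by
    intro j c hjc
    obtain ⟨i, hij, hic⟩ : ∃ i : Fin 4, i ≠ j ∧ i ≠ c := by
      have h1 : ({j, c} : Finset (Fin 4)).card ≤ 2 :=
        le_trans (Finset.card_insert_le _ _) (by simp)
      have h2 : ({j, c}ᶜ : Finset (Fin 4)).Nonempty := by
        rw [← Finset.card_pos, Finset.card_compl]
        have h4 : Fintype.card (Fin 4) = 4 := rfl
        omega
      obtain ⟨i, hi⟩ := h2
      simp only [Finset.mem_compl, Finset.mem_insert, Finset.mem_singleton, not_or] at hi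
      exact ⟨i, hi.1, hi.2⟩
    have h1 := minor i j i j
    have h2 := minor i j i c
    have h3 := minor i j c j
    rw [if_pos rfl, if_pos rfl, if_neg (Ne.symm hij), if_neg hij] at h1
    rw [if_pos rfl, if_neg hjc, if_neg (Ne.symm hij), if_neg hic] at h2
    rw [if_neg hic, if_pos rfl, if_neg hjc, if_neg hij] at h3
    have key : (e * e') * M j c = 0 := by
      linear_combination M j j * h2 + M j i * h3 - M j c * h1
    exact (mul_eq_zero.mp key).resolve_left hsg0
  have hdiagmul : ∀ i j : Fin 4, i ≠ j → M i i * M j j = e * e' := by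
    intro i j hij
    have h := minor i j i j
    rw [if_pos rfl, if_pos rfl, if_neg (Ne.symm hij), if_neg hij,
      hoff j i (Ne.symm hij), hoff i j hij] at h
    linarith [h]
  have d01 := hdiagmul 0 1 (by decide)
  have d02 := hdiagmul 0 2 (by decide)
  have d03 := hdiagmul 0 3 (by decide)
  have d12 := hdiagmul 1 2 (by decide)
  have ha0 : M 0 0 ≠ 0 := left_ne_zero_of_mul (ne_of_eq_of_ne d01 hsg0)
  have hb0 : M 1 1 ≠ 0 := right_ne_zero_of_mul (ne_of_eq_of_ne d01 hsg0)
  have h12 : M 1 1 = M 2 2 := mul_left_cancel₀ ha0 (d01.trans d02.symm)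
  have hbt : M 1 1 = M 0 0 := by
    have hb2 : M 1 1 * M 1 1 = e * e' := by nth_rewrite 2 [h12]; exact d12
    exact mul_right_cancel₀ hb0 (hb2.trans d01.symm)
  have h22 : M 2 2 = M 0 0 := h12.symm.trans hbt
  have ht2 : M 0 0 * M 0 0 = e * e' := by nth_rewrite 2 [← hbt]; exact d01
  have h33 : M 3 3 = M 0 0 :=
    mul_left_cancel₀ ha0 (d03.trans ht2.symm)
  have hMt : ∀ i : Fin 4, M i i = M 0 0 := by
    intro i; fin_cases i
    · rfl
    · exact hbt
    · exact h22
    · exact h33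
  have hsgone : e * e' = 1 := by
    rcases hsg1 with h | h
    · exact h
    · exfalso; rw [h] at ht2; nlinarith [sq_nonneg (M 0 0)]
  have htpm : M 0 0 = 1 ∨ M 0 0 = -1 :=
    mul_self_eq_one_iff.mp (ht2.trans hsgone)
  -- reconstruct: E' agrees with M 0 0 • E on edges to vertex 0
  have hu' : ∀ i : Fin 4, E' (vmap i) 0 = M 0 0 • b i := by
    intro i
    rw [hrepr i, Finset.sum_eq_single i]
    · rw [hMt i]
    · intro k _ hk; rw [hoff i k (Ne.symm hk), zero_smul]
    · intro h; exact absurd (Finset.mem_univ i) h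
  have hE0 : ∀ i : Fin 5, E' i 0 = M 0 0 • E i 0 := by
    have hcover : ∀ i : Fin 5, i = 0 ∨ ∃ k : Fin 4, i = vmap k := by decide
    intro i
    rcases hcover i with rfl | ⟨k, rfl⟩
    · have z1 : E' 0 0 = 0 := by
        funext A; have h := congrFun (hanti' 0 0) A
        simp only [Pi.add_apply, Pi.zero_apply] at h ⊢; linarith
      have z2 : E 0 0 = 0 := by
        funext A; have h := congrFun (hanti 0 0) A
        simp only [Pi.add_apply, Pi.zero_apply] at h ⊢; linarith
      rw [z1, z2, smul_zero]
    · have h := hu' k; rw [hbv k] at h; exact h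
  refine ⟨M 0 0, htpm, fun i j => ?_⟩
  have hEij' : E' i j = E' i 0 - E' j 0 := by
    funext A
    have g1 := congrFun (hclose' i j 0) A
    have g2 := congrFun (hanti' 0 i) A
    simp only [Pi.add_apply, Pi.zero_apply, Pi.sub_apply] at g1 g2 ⊢
    linarith
  have hEij : E i j = E i 0 - E j 0 := by
    funext A
    have g1 := congrFun (hclose i j 0) A
    have g2 := congrFun (hanti 0 i) A
    simp only [Pi.add_apply, Pi.zero_apply, Pi.sub_apply] at g1 g2 ⊢
    linarith
  rw [hEij', hEij, hE0 i, hE0 j, smul_sub]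
end

section
/- Sign factorization lemma: let α_{ij} (i,j = 1,…,5, i ≠ j) be a symmetric matrix of nonzero reals and Û_i ∈ ℝ⁴ unit vectors, any four of which are linearly independent, such that for each i there exists α_{ii} with ∑_{j=1}^5 α_{ij}Û_j = 0. Then α_{km}α_{lj} = α_{kj}α_{lm} for all indices, and consequently there exist nonzero reals α_i and a sign ε̃ = ±1 with α_{ij} = ε̃ α_i α_j for all i ≠ j, and ∑_j α_j Û_j = 0. -/
open Matrix Complex Finset

/-- the sign-factorization lemma α_{ij} = ε̃ αᵢ αⱼ. -/
theorem stmt15 (a : Fin 5 → Fin 5 → ℝ) (Uh : Fin 5 → Fin 4 → ℝ)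
    (hsymm : ∀ i j, a i j = a j i)
    (hne : ∀ i j, i ≠ j → a i j ≠ 0)
    (hunit : ∀ i, ∑ I, Uh i I ^ 2 = 1)
    (hnd : ∀ i : Fin 5, LinearIndependent ℝ (fun j : {j : Fin 5 // j ≠ i} => Uh j.1))
    (hdiag : ∀ i, ∃ c : ℝ, c • Uh i + ∑ j ∈ Finset.univ \ {i}, a i j • Uh j = 0) :
    (∀ k m l j : Fin 5, k ≠ m → l ≠ j → k ≠ j → l ≠ m →
        a k m * a l j = a k j * a l m) ∧
      ∃ α : Fin 5 → ℝ, ∃ s : ℝ, (s = 1 ∨ s = -1) ∧ (∀ i, α i ≠ 0) ∧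
        (∀ i j, i ≠ j → a i j = s * α i * α j) ∧
        ∑ j, α j • Uh j = 0 := by
  classical
  -- key: a kernel vector vanishing at one coordinate is zero
  have key : ∀ (k : Fin 5) (x : Fin 5 → ℝ), (∑ j, x j • Uh j = 0) → x k = 0 →
      ∀ j, x j = 0 := by
    intro k x hsum hk j
    have hli := Fintype.linearIndependent_iff.mp (hnd k) (fun j => x j.1)
    have hsub : ∑ p : {j : Fin 5 // j ≠ k}, x p.1 • Uh p.1 = 0 := by
      have hmem : ∀ y : Fin 5, y ∈ Finset.univ \ {k} ↔ y ≠ k := by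
        intro y; simp
      have h1 : ∑ p ∈ Finset.univ \ {k}, x p • Uh p
          = ∑ p : {j : Fin 5 // j ≠ k}, x p.1 • Uh p.1 :=
        Finset.sum_subtype _ hmem (fun p => x p • Uh p)
      have h2 : ∑ p, x p • Uh p
          = ∑ p ∈ Finset.univ \ {k}, x p • Uh p + x k • Uh k :=
        (Finset.sum_eq_sum_sdiff_singleton_add (Finset.mem_univ k) _)
      rw [← h1, ← sub_eq_zero]
      rw [h2, hk] at hsum
      simpa using hsum
    by_cases hj : j = k
    · rw [hj]; exact hk
    · exact hli hsub ⟨j, hj⟩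
  -- rows of the full matrix
  set c : Fin 5 → ℝ := fun i => (hdiag i).choose with hc
  set row : Fin 5 → Fin 5 → ℝ := fun i j => if j = i then c i else a i j with hrowdef
  have hrow : ∀ i, ∑ j, row i j • Uh j = 0 := by
    intro i
    have hspec := (hdiag i).choose_spec
    have h2 : ∑ j, row i j • Uh j
        = ∑ j ∈ Finset.univ \ {i}, row i j • Uh j + row i i • Uh i :=
      Finset.sum_eq_sum_sdiff_singleton_add (Finset.mem_univ i) _
    rw [h2]
    have h3 : ∑ j ∈ Finset.univ \ {i}, row i j • Uh j
        = ∑ j ∈ Finset.univ \ {i}, a i j • Uh j := by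
      apply Finset.sum_congr rfl
      intro j hj
      have : j ≠ i := by simpa using hj
      simp [hrowdef, this]
    rw [h3]
    have : row i i = c i := by simp [hrowdef]
    rw [this]
    rw [add_comm]
    exact hspec
  -- pairwise proportionality with row 0
  have hprop : ∀ i j, row 0 0 * row i j = row i 0 * row 0 j := by
    intro i j
    set y : Fin 5 → ℝ := fun j => row 0 0 * row i j - row i 0 * row 0 j with hy
    have hyk : ∑ j, y j • Uh j = 0 := by
      have : ∀ j, y j • Uh j
          = row 0 0 • (row i j • Uh j) - row i 0 • (row 0 j • Uh j) := by
        intro j; simp [hy, sub_smul, mul_smul]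
      rw [Finset.sum_congr rfl (fun j _ => this j), Finset.sum_sub_distrib,
        ← Finset.smul_sum, ← Finset.smul_sum, hrow, hrow, smul_zero, smul_zero, sub_zero]
    have hy0 : y 0 = 0 := by simp [hy]; ring
    have := key 0 y hyk hy0 j
    have h := sub_eq_zero.mp (by simpa [hy] using this)
    linarith [h]
  have h01 : (0 : Fin 5) ≠ 1 := by decide
  -- β 0 ≠ 0
  have hb0 : row 0 0 ≠ 0 := by
    intro h
    have := key 0 (row 0) (hrow 0) h 1
    have : a 0 1 = 0 := by simpa [hrowdef, h01.symm] using this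
    exact hne 0 1 h01 this
  have hbne : ∀ j, row 0 j ≠ 0 := by
    intro j
    by_cases hj : j = 0
    · rw [hj]; exact hb0
    · have : row 0 j = a 0 j := by simp [hrowdef, hj]
      rw [this]; exact hne 0 j (Ne.symm hj)
  -- factorization a i j = μ * β i * β j
  set μ : ℝ := 1 / row 0 0 with hμ
  have hμne : μ ≠ 0 := by simp [hμ, hb0]
  have hfac : ∀ i j, i ≠ j → a i j = μ * row 0 i * row 0 j := by
    intro i j hij
    have haij : a i j = row i j := by simp [hrowdef, Ne.symm hij]
    have hp := hprop i j
    by_cases hi : i = 0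
    · subst hi
      rw [haij]
      rw [hμ]; field_simp
    · have hri0 : row i 0 = row 0 i := by
        have hi' : ¬(0 : Fin 5) = i := fun h => hi h.symm
        have h1 : row i 0 = a i 0 := by simp [hrowdef, hi']
        have h2 : row 0 i = a 0 i := by simp [hrowdef, hi]
        rw [h1, h2, hsymm]
      rw [haij]
      rw [hri0] at hp
      rw [hμ]; field_simp
      linarith [hp]
  -- build α and s
  set s : ℝ := if 0 < μ then (1 : ℝ) else -1 with hs
  set α : Fin 5 → ℝ := fun i => Real.sqrt |μ| * row 0 i with hα
  have hsqrt : Real.sqrt |μ| * Real.sqrt |μ| = |μ| :=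
    Real.mul_self_sqrt (abs_nonneg μ)
  have hsqrtne : Real.sqrt |μ| ≠ 0 := by
    intro h
    rw [h, zero_mul] at hsqrt
    exact hμne (abs_eq_zero.mp hsqrt.symm)
  have hsmu : s * |μ| = μ := by
    by_cases hpos : 0 < μ
    · simp [hs, hpos, abs_of_pos hpos]
    · have hneg : μ < 0 := lt_of_le_of_ne (not_lt.mp hpos) hμne
      simp [hs, hpos, abs_of_neg hneg]
  have hfac2 : ∀ i j, i ≠ j → a i j = s * α i * α j := by
    intro i j hij
    rw [hfac i j hij, hα]
    have : s * (Real.sqrt |μ| * row 0 i) * (Real.sqrt |μ| * row 0 j)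
        = (s * (Real.sqrt |μ| * Real.sqrt |μ|)) * row 0 i * row 0 j := by ring
    rw [this, hsqrt, hsmu]
  refine ⟨?_, α, s, ?_, ?_, hfac2, ?_⟩
  · intro k m l j hkm hlj hkj hlm
    rw [hfac2 k m hkm, hfac2 l j hlj, hfac2 k j hkj, hfac2 l m hlm]
    ring
  · by_cases hpos : 0 < μ
    · left; simp [hs, hpos]
    · right; simp [hs, hpos]
  · intro i
    exact mul_ne_zero hsqrtne (hbne i)
  · have : ∑ j, α j • Uh j = Real.sqrt |μ| • ∑ j, row 0 j • Uh j := by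
      rw [Finset.smul_sum]
      apply Finset.sum_congr rfl
      intro j _
      simp [hα, mul_smul]
    rw [this, hrow, smul_zero]
end
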